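/- No wheel is a Burling graph: if G is a graph consisting of an induced cycle H of length at least 4 together with one additional vertex c having at least three neighbors on H (and no other vertices), then no orientation of G can be derived from a Burling tree. -/

import Mathlib

/-- An oriented graph on vertex type `V`: an irreflexive, asymmetric arc relation. -/
structure OrientedGraph (V : Type) where
  arc : V → V → Prop
  irrefl : ∀ v, ¬ arc v v
  asymm : ∀ u v, arc u v → ¬ arc v u

/-- A Burling tree `(T, root, lastBorn, choose)`.  The tree is encoded by its parent
function (with `parent root = root`); `lastBorn v` is a distinguished child of each
non-leaf `v`; `choose v` is the vertex set of a (possibly empty) branch of the tree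
starting at the last-born of the parent of `v` when `v` is neither the root nor a
last-born, and is empty otherwise. -/
structure BurlingTree (V : Type) where
  root : V
  parent : V → V
  parent_root : parent root = root
  reaches_root : ∀ v, ∃ n, parent^[n] v = root
  lastBorn : V → V
  lastBorn_child : ∀ v w, w ≠ root → parent w = v →
    lastBorn v ≠ root ∧ parent (lastBorn v) = v
  choose : V → Set V
  choose_root : choose root = ∅
  choose_lastBorn : ∀ v, v ≠ root → lastBorn (parent v) = v → choose v = ∅
  choose_branch : ∀ v, v ≠ root → lastBorn (parent v) ≠ v →
    choose v = ∅ ∨ ∃ b, (∃ n, parent^[n] b = lastBorn (parent v)) ∧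
      choose v = {x | (∃ n, parent^[n] x = lastBorn (parent v)) ∧ ∃ n, parent^[n] b = x}

namespace BurlingTree

variable {V : Type} (T : BurlingTree V)

/-- `u` is an ancestor of `v` in `T` (possibly `u = v`). -/
def Anc (u v : V) : Prop := ∃ n, T.parent^[n] v = u

/-- Arc relation of the oriented graph derived from `T` with vertex set `S`
(the induced subgraph, on `S`, of the graph fully derived from `T`). -/
def Arc (S : Set V) (u v : V) : Prop := u ∈ S ∧ v ∈ S ∧ v ∈ T.choose u

/-- Underlying undirected graph of the derived graph on `S`. -/
def UGraph (S : Set V) : SimpleGraph V := SimpleGraph.fromRel (T.Arc S)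

/-- Closed in-neighborhood `N⁻[v]` in the derived graph on `S`. -/
def InNbhd (S : Set V) (v : V) : Set V := insert v {u | T.Arc S u v}

/-- The top-set of the derived graph on `S`: vertices of `S` that are the unique
vertex of `S` on the branch of `T` from the root to them. -/
def TopSet (S : Set V) : Set V := {v | v ∈ S ∧ ∀ x ∈ S, T.Anc x v → x = v}

end BurlingTree

/-- Reachability between `u` and `w` inside the set `A` of vertices of `G`. -/
def ReachIn {V : Type} (G : SimpleGraph V) (A : Set V) (u w : V) : Prop :=
  Relation.ReflTransGen (fun x y => x ∈ A ∧ y ∈ A ∧ G.Adj x y) u w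

/-- `N⁻[v]` is a full in-star cutset of the graph derived from `T` on `S`. -/
def BurlingTree.IsFullInStarCutset {V : Type} (T : BurlingTree V) (S : Set V) (v : V) : Prop :=
  ∃ a ∈ S \ T.InNbhd S v, ∃ b ∈ S \ T.InNbhd S v,
    ¬ ReachIn (T.UGraph S) (S \ T.InNbhd S v) a b

/-- The arc relation `A` is an in-forest: a disjoint union of orientations of rooted
trees with all edges oriented towards the root.  Equivalently: it is irreflexive and
asymmetric, its underlying graph is a forest, every vertex has at most one
out-neighbor, and from every vertex the unique outgoing directed path terminates in
a sink. -/
def IsInForestRel {V : Type} (A : V → V → Prop) : Prop :=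
  (∀ v, ¬ A v v) ∧ (∀ u v, A u v → ¬ A v u) ∧
  (SimpleGraph.fromRel A).IsAcyclic ∧
  (∀ u v w, A u v → A u w → v = w) ∧
  (∀ v, ∃ r, Relation.ReflTransGen A v r ∧ ∀ w, ¬ A r w)

/-- The arc relation `A` forms an in-tree on the vertex set `U`:
an in-forest all of whose vertices in `U` reach a common root. -/
def IsInTreeOn {V : Type} (A : V → V → Prop) (U : Set V) : Prop :=
  IsInForestRel A ∧ ∃ r ∈ U, ∀ v ∈ U, Relation.ReflTransGen A v r

/-- The graph with arc relation `A` and vertex set `U` is an oriented chandelier: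
it is obtained from an in-tree `G'` (on `U` minus an apex `v`) with at least two
leaves by adding the vertex `v` and exactly the arcs from each leaf of `G'` to `v`.
A leaf of the in-tree is a source having exactly one out-neighbor. -/
def ChandelierOn {V : Type} (A : V → V → Prop) (U : Set V) : Prop :=
  ∃ v ∈ U,
    IsInTreeOn (fun a b => A a b ∧ a ≠ v ∧ b ≠ v) (U \ {v}) ∧
    (∀ u, ¬ A v u) ∧
    (∀ u, A u v ↔ (u ∈ U ∧ u ≠ v ∧ (∀ w, ¬ (A w u ∧ w ≠ v ∧ u ≠ v)) ∧
       ∃ w, A u w ∧ w ≠ v ∧ u ≠ v)) ∧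
    (∃ u₁ u₂, u₁ ≠ u₂ ∧ A u₁ v ∧ A u₂ v)

namespace OrientedGraph

variable {V : Type} (G : OrientedGraph V)

/-- Underlying undirected simple graph of an oriented graph. -/
def toSimpleGraph : SimpleGraph V := SimpleGraph.fromRel G.arc

/-- `G` is an in-forest. -/
def IsInForest : Prop := IsInForestRel G.arc

/-- `G` is an oriented chandelier. -/
def IsChandelier : Prop := ChandelierOn G.arc Set.univ

/-- Closed in-neighborhood `N⁻[v]`. -/
def InNbhd (v : V) : Set V := insert v {u | G.arc u v}

/-- `G` has a full in-star cutset: for some vertex `v`, removing `N⁻[v]`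
disconnects the underlying graph. -/
def HasFullInStarCutset : Prop :=
  ∃ v, ∃ a ∈ (G.InNbhd v)ᶜ, ∃ b ∈ (G.InNbhd v)ᶜ,
    ¬ ReachIn G.toSimpleGraph (G.InNbhd v)ᶜ a b

/-- `v` is a cut vertex of `G`: some two vertices distinct from `v` are connected
in the underlying graph but disconnected after removing `v`. -/
def IsCutVertex (v : V) : Prop :=
  ∃ a b, a ≠ v ∧ b ≠ v ∧ G.toSimpleGraph.Reachable a b ∧
    ¬ ReachIn G.toSimpleGraph {v}ᶜ a b

/-- `G` is a `k`-Burling oriented graph: it is isomorphic to a graph derived from a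
Burling tree `T` such that every branch of `T` contains at most `k` vertices of `G`. -/
def IsKBurling (k : ℕ) : Prop :=
  ∃ (W : Type) (T : BurlingTree W) (f : V → W),
    Function.Injective f ∧
    (∀ u v, G.arc u v ↔ T.Arc (Set.range f) (f u) (f v)) ∧
    ∀ b : W, ({x | x ∈ Set.range f ∧ T.Anc x b}).ncard ≤ k

end OrientedGraph

/-- The graph with arc relation `A` on vertex set `U` is (isomorphic to) a graph
derived from some Burling tree. -/
def IsDerivedOn {V : Type} (A : V → V → Prop) (U : Set V) : Prop :=
  ∃ (W : Type) (T : BurlingTree W) (f : V → W),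
    Set.InjOn f U ∧ ∀ a ∈ U, ∀ b ∈ U, (A a b ↔ f b ∈ T.choose (f a))

/-- `C` is a hole of the graph derived from `T` on `S`: an induced cycle of length
at least 4 of the underlying graph (a finite set of at least four vertices whose
induced subgraph is connected and 2-regular). -/
def BurlingTree.IsHole {V : Type} (T : BurlingTree V) (S : Set V) (C : Set V) : Prop :=
  C ⊆ S ∧ C.Finite ∧ 4 ≤ C.ncard ∧
  (∀ x ∈ C, ({y | y ∈ C ∧ (T.UGraph S).Adj x y}).ncard = 2) ∧
  (∀ x ∈ C, ∀ y ∈ C, ReachIn (T.UGraph S) C x y)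

/-- `p` is the pivot of the hole `C`: a sink of the hole both of whose neighbors in
the hole are sources of the hole (the antennas). -/
def BurlingTree.IsPivotOf {V : Type} (T : BurlingTree V) (S : Set V) (C : Set V) (p : V) : Prop :=
  p ∈ C ∧ (∀ w ∈ C, ¬ T.Arc S p w) ∧
  (∀ q ∈ C, (T.UGraph S).Adj p q → ∀ w ∈ C, ¬ T.Arc S w q)


/-! ### Auxiliary development for stmt18 -/

namespace BurlingTree

open scoped Classical
noncomputable section

variable {V : Type} (T : BurlingTree V)

/- ### Tree basics -/

lemma anc_refl (v : V) : T.Anc v v := ⟨0, rfl⟩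

lemma anc_parent (v : V) : T.Anc (T.parent v) v := ⟨1, rfl⟩

lemma anc_trans {a b c : V} (h1 : T.Anc a b) (h2 : T.Anc b c) : T.Anc a c := by
  obtain ⟨n, hn⟩ := h1; obtain ⟨m, hm⟩ := h2
  exact ⟨n + m, by rw [Function.iterate_add_apply, hm, hn]⟩

lemma iterate_root (n : ℕ) : T.parent^[n] T.root = T.root := by
  induction n with
  | zero => rfl
  | succ k ih => rw [Function.iterate_succ_apply', ih, T.parent_root]

lemma anc_root (v : V) : T.Anc T.root v := T.reaches_root v

lemma root_anc_eq {v : V} (h : T.Anc v T.root) : v = T.root := by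
  obtain ⟨n, hn⟩ := h; rw [iterate_root] at hn; exact hn.symm

lemma anc_antisymm {a b : V} (h1 : T.Anc a b) (h2 : T.Anc b a) : a = b := by
  obtain ⟨n, hn⟩ := h1; obtain ⟨m, hm⟩ := h2
  rcases Nat.eq_zero_or_pos n with hn0 | hnpos
  · subst hn0; exact hn.symm
  rcases Nat.eq_zero_or_pos m with hm0 | hmpos
  · subst hm0; exact hm
  -- b is on a cycle, hence b = root
  have hcyc : T.parent^[m + n] b = b := by
    rw [Function.iterate_add_apply, hn, hm]
  obtain ⟨k, hk⟩ := T.reaches_root b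
  have hiter : ∀ j, T.parent^[(m+n) * j] b = b := by
    intro j
    induction j with
    | zero => rfl
    | succ i ih => rw [Nat.mul_succ, Function.iterate_add_apply, hcyc, ih]
  have hbig : (m+n) * (k+1) ≥ k := by
    have h1 : 1 ≤ m + n := by omega
    calc k ≤ k + 1 := by omega
    _ = 1 * (k+1) := by ring
    _ ≤ (m+n) * (k+1) := Nat.mul_le_mul_right _ h1
  have : T.parent^[(m+n)*(k+1)] b = T.root := by
    have := Nat.add_sub_cancel' hbig
    calc T.parent^[(m+n)*(k+1)] b = T.parent^[((m+n)*(k+1) - k) + k] b := by rw [Nat.sub_add_cancel hbig]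
    _ = T.parent^[(m+n)*(k+1) - k] (T.parent^[k] b) := by rw [Function.iterate_add_apply]
    _ = T.root := by rw [hk, iterate_root]
  have hb : b = T.root := by rw [← hiter (k+1), this]
  subst hb
  have : a = T.root := by rw [← hn, iterate_root]
  rw [this]

lemma anc_total_of_common {a b x : V} (h1 : T.Anc a x) (h2 : T.Anc b x) :
    T.Anc a b ∨ T.Anc b a := by
  obtain ⟨n, hn⟩ := h1; obtain ⟨m, hm⟩ := h2
  rcases le_total n m with h | h
  · right
    exact ⟨m - n, by rw [← hn, ← Function.iterate_add_apply, Nat.sub_add_cancel h, hm]⟩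
  · left
    exact ⟨n - m, by rw [← hm, ← Function.iterate_add_apply, Nat.sub_add_cancel h, hn]⟩

/-- depth of a vertex -/
noncomputable def dep (v : V) : ℕ := Nat.find (T.reaches_root v)

lemma dep_spec (v : V) : T.parent^[T.dep v] v = T.root := Nat.find_spec (T.reaches_root v)

lemma dep_min {v : V} {k : ℕ} (h : T.parent^[k] v = T.root) : T.dep v ≤ k :=
  Nat.find_le h

lemma dep_root : T.dep T.root = 0 := Nat.le_zero.mp (T.dep_min (by rfl))

lemma eq_root_of_dep_zero {v : V} (h : T.dep v = 0) : v = T.root := by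
  have := T.dep_spec v; rw [h] at this; exact this

lemma dep_anc_le {a v : V} (h : T.Anc a v) : T.dep a ≤ T.dep v := by
  obtain ⟨n, hn⟩ := h
  rcases le_total n (T.dep v) with hle | hgt
  · have : T.parent^[T.dep v - n] a = T.root := by
      rw [← hn, ← Function.iterate_add_apply, Nat.sub_add_cancel hle, T.dep_spec]
    calc T.dep a ≤ T.dep v - n := T.dep_min this
    _ ≤ T.dep v := Nat.sub_le _ _
  · have : a = T.root := by
      rw [← hn]
      have : n = (n - T.dep v) + T.dep v := (Nat.sub_add_cancel hgt).symm
      rw [this, Function.iterate_add_apply, T.dep_spec, iterate_root]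
    rw [this, dep_root]; exact Nat.zero_le _

lemma dep_anc_lt {a v : V} (h : T.Anc a v) (hne : a ≠ v) : T.dep a < T.dep v := by
  obtain ⟨n, hn⟩ := h
  have hn0 : n ≠ 0 := by rintro rfl; exact hne hn.symm
  have hvroot : v ≠ T.root := by
    rintro rfl
    exact hne (by rw [← hn, iterate_root])
  have hdv : 1 ≤ T.dep v := by
    rcases Nat.eq_zero_or_pos (T.dep v) with h0 | h1
    · exact absurd (T.eq_root_of_dep_zero h0) hvroot
    · exact h1
  rcases le_total n (T.dep v) with hle | hgt
  · have : T.parent^[T.dep v - n] a = T.root := by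
      rw [← hn, ← Function.iterate_add_apply, Nat.sub_add_cancel hle, T.dep_spec]
    calc T.dep a ≤ T.dep v - n := T.dep_min this
    _ < T.dep v := by omega
  · have : a = T.root := by
      rw [← hn]
      have : n = (n - T.dep v) + T.dep v := (Nat.sub_add_cancel hgt).symm
      rw [this, Function.iterate_add_apply, T.dep_spec, iterate_root]
    rw [this, dep_root]; omega

lemma anc_eq_of_dep_le {a v : V} (h : T.Anc a v) (hd : T.dep v ≤ T.dep a) : a = v := by
  by_contra hne
  exact absurd hd (not_le.mpr (T.dep_anc_lt h hne))

lemma dep_parent {v : V} (h : v ≠ T.root) : T.dep v = T.dep (T.parent v) + 1 := by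
  have h1 : 1 ≤ T.dep v := by
    rcases Nat.eq_zero_or_pos (T.dep v) with h0 | h1
    · exact absurd (T.eq_root_of_dep_zero h0) h
    · exact h1
  have hs : T.parent^[T.dep v - 1] (T.parent v) = T.root := by
    have : T.parent^[(T.dep v - 1) + 1] v = T.root := by
      rw [Nat.sub_add_cancel h1]; exact T.dep_spec v
    rw [Function.iterate_add_apply] at this
    simpa using this
  have hle : T.dep (T.parent v) ≤ T.dep v - 1 := T.dep_min hs
  have hge : T.dep v ≤ T.dep (T.parent v) + 1 := by
    apply T.dep_min
    rw [Function.iterate_succ_apply]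
    exact T.dep_spec (T.parent v)
  omega

lemma anc_parent_of_ne {a v : V} (h : T.Anc a v) (hne : a ≠ v) : T.Anc a (T.parent v) := by
  obtain ⟨n, hn⟩ := h
  have hn0 : n ≠ 0 := by rintro rfl; exact hne hn.symm
  obtain ⟨m, rfl⟩ := Nat.exists_eq_succ_of_ne_zero hn0
  exact ⟨m, by rw [← hn, Function.iterate_succ_apply]⟩

/-- distinct siblings have disjoint descendant sets -/
lemma sib_disjoint {a b x : V} (hp : T.parent a = T.parent b) (hne : a ≠ b)
    (ha : a ≠ T.root) (hb : b ≠ T.root)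
    (hax : T.Anc a x) (hbx : T.Anc b x) : False := by
  rcases T.anc_total_of_common hax hbx with h | h
  · have := T.dep_anc_lt h hne
    have da := T.dep_parent ha
    have db := T.dep_parent hb
    rw [hp] at da; omega
  · have := T.dep_anc_lt h (Ne.symm hne)
    have da := T.dep_parent ha
    have db := T.dep_parent hb
    rw [hp] at da; omega


/- ### choose structure -/

/-- Unpack the structure of a nonempty `choose` set. -/
lemma choose_struct {u v : V} (h : v ∈ T.choose u) :
    u ≠ T.root ∧ T.lastBorn (T.parent u) ≠ u ∧ T.lastBorn (T.parent u) ≠ T.root ∧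
    T.parent (T.lastBorn (T.parent u)) = T.parent u ∧
    ∃ b, T.Anc (T.lastBorn (T.parent u)) b ∧
      T.choose u = {x | T.Anc (T.lastBorn (T.parent u)) x ∧ T.Anc x b} := by
  have hu : u ≠ T.root := by
    rintro rfl; rw [T.choose_root] at h; exact h
  have hLu : T.lastBorn (T.parent u) ≠ u := by
    intro heq; rw [T.choose_lastBorn u hu heq] at h; exact h
  obtain ⟨hL1, hL2⟩ := T.lastBorn_child (T.parent u) u hu rfl
  rcases T.choose_branch u hu hLu with h0 | ⟨b, hb, hset⟩
  · rw [h0] at h; exact absurd h (Set.notMem_empty v)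
  · exact ⟨hu, hLu, hL1, hL2, b, hb, hset⟩

lemma choose_anc_L {u v : V} (h : v ∈ T.choose u) :
    T.Anc (T.lastBorn (T.parent u)) v := by
  obtain ⟨-, -, -, -, b, -, hset⟩ := T.choose_struct h
  rw [hset] at h; exact h.1

lemma choose_interval {u v x : V} (h : v ∈ T.choose u)
    (h1 : T.Anc (T.lastBorn (T.parent u)) x) (h2 : T.Anc x v) : x ∈ T.choose u := by
  obtain ⟨-, -, -, -, b, -, hset⟩ := T.choose_struct h
  rw [hset] at h ⊢
  exact ⟨h1, T.anc_trans h2 h.2⟩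

lemma choose_chain {u v w : V} (hv : v ∈ T.choose u) (hw : w ∈ T.choose u) :
    T.Anc v w ∨ T.Anc w v := by
  obtain ⟨-, -, -, -, b, -, hset⟩ := T.choose_struct hv
  rw [hset] at hv hw
  exact T.anc_total_of_common hv.2 hw.2

lemma choose_not_anc1 {u v : V} (h : v ∈ T.choose u) : ¬ T.Anc u v := by
  intro hanc
  obtain ⟨hu, hLu, hL1, hL2, b, -, -⟩ := T.choose_struct h
  exact T.sib_disjoint hL2 hLu hL1 hu (T.choose_anc_L h) hanc

lemma choose_not_anc2 {u v : V} (h : v ∈ T.choose u) : ¬ T.Anc v u := by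
  intro hanc
  obtain ⟨hu, hLu, hL1, hL2, b, -, -⟩ := T.choose_struct h
  exact T.sib_disjoint hL2 hLu hL1 hu (T.anc_trans (T.choose_anc_L h) hanc) (T.anc_refl u)

lemma choose_ne {u v : V} (h : v ∈ T.choose u) : v ≠ u := by
  rintro rfl; exact T.choose_not_anc1 h (T.anc_refl v)

lemma dep_L_eq {u : V} (hu : u ≠ T.root) (hL1 : T.lastBorn (T.parent u) ≠ T.root)
    (hL2 : T.parent (T.lastBorn (T.parent u)) = T.parent u) :
    T.dep (T.lastBorn (T.parent u)) = T.dep u := by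
  rw [T.dep_parent hu, T.dep_parent hL1, hL2]

lemma dep_le_choose {u v : V} (h : v ∈ T.choose u) : T.dep u ≤ T.dep v := by
  obtain ⟨hu, hLu, hL1, hL2, b, -, -⟩ := T.choose_struct h
  have := T.dep_anc_le (T.choose_anc_L h)
  have := T.dep_L_eq hu hL1 hL2
  omega

lemma choose_empty_of_dep_eq {u v : V} (h : v ∈ T.choose u) (hd : T.dep u = T.dep v) :
    T.choose v = ∅ := by
  obtain ⟨hu, hLu, hL1, hL2, b, -, -⟩ := T.choose_struct h
  have hdL := T.dep_L_eq hu hL1 hL2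
  have hL : T.lastBorn (T.parent u) = v :=
    T.anc_eq_of_dep_le (T.choose_anc_L h) (by omega)
  have hvroot : v ≠ T.root := hL ▸ hL1
  apply T.choose_lastBorn v hvroot
  rw [← hL, hL2, hL]

lemma choose_no_mutual {u v : V} (h : v ∈ T.choose u) (h2 : u ∈ T.choose v) : False := by
  have d1 := T.dep_le_choose h
  have d2 := T.dep_le_choose h2
  have : T.choose v = ∅ := T.choose_empty_of_dep_eq h (by omega)
  rw [this] at h2; exact h2

/-- crossing lemma: anything on the branch above a choose-element and not above
`u` itself is also chosen. -/
lemma choose_crossing {u v t : V} (h : v ∈ T.choose u) (h1 : T.Anc t v)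
    (h2 : ¬ T.Anc t u) : t ∈ T.choose u := by
  rcases T.anc_total_of_common (T.choose_anc_L h) h1 with hc | hc
  · exact T.choose_interval h hc h1
  · by_cases he : t = T.lastBorn (T.parent u)
    · exact T.choose_interval h (he ▸ T.anc_refl t) h1
    · exfalso
      obtain ⟨hu, hLu, hL1, hL2, b, -, -⟩ := T.choose_struct h
      have h3 := T.anc_parent_of_ne hc he
      rw [hL2] at h3
      exact h2 (T.anc_trans h3 (T.anc_parent u))

/-- arcs from strictly inside a subtree stay strictly inside it. -/
lemma choose_stay {t a v : V} (ht : T.Anc t a) (hne : a ≠ t) (h : v ∈ T.choose a) :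
    T.Anc t v ∧ v ≠ t := by
  obtain ⟨hu, hLu, hL1, hL2, b, -, -⟩ := T.choose_struct h
  have hpa : T.Anc t (T.parent a) := T.anc_parent_of_ne ht (Ne.symm hne)
  have hL : T.Anc t (T.lastBorn (T.parent a)) := by
    have h3 : T.Anc (T.parent (T.lastBorn (T.parent a))) (T.lastBorn (T.parent a)) :=
      T.anc_parent _
    rw [hL2] at h3
    exact T.anc_trans hpa h3
  have hv : T.Anc t v := T.anc_trans hL (T.choose_anc_L h)
  refine ⟨hv, ?_⟩
  rintro rfl
  have d1 := T.dep_anc_le (T.choose_anc_L h)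
  have d2 := T.dep_anc_le hpa
  have d3 : T.dep (T.lastBorn (T.parent a)) = T.dep (T.parent a) + 1 := by
    rw [T.dep_parent hL1, hL2]
  omega

/-- comparable distinct vertices have no common out-neighbour. -/
lemma no_common_out {a b w : V} (hab : T.Anc a b) (hne : a ≠ b)
    (ha : w ∈ T.choose a) (hb : w ∈ T.choose b) : False := by
  have := T.choose_stay hab (Ne.symm hne) hb
  exact T.choose_not_anc1 ha this.1

/- ### S-level arc lemmas -/

variable {S : Set V}

lemma arc_irrefl {v : V} : ¬ T.Arc S v v := fun h => T.choose_ne h.2.2 rfl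

lemma arc_asymm {u v : V} (h1 : T.Arc S u v) (h2 : T.Arc S v u) : False :=
  T.choose_no_mutual h1.2.2 h2.2.2

lemma ugraph_adj {x y : V} : (T.UGraph S).Adj x y ↔ x ≠ y ∧ (T.Arc S x y ∨ T.Arc S y x) := by
  unfold UGraph
  exact SimpleGraph.fromRel_adj _ _ _

lemma adj_not_anc {x y : V} (h : (T.UGraph S).Adj x y) : ¬ T.Anc x y := by
  rw [T.ugraph_adj] at h
  rcases h.2 with h' | h'
  · exact T.choose_not_anc1 h'.2.2
  · exact T.choose_not_anc2 h'.2.2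

lemma adj_symm' {x y : V} (h : (T.UGraph S).Adj x y) : (T.UGraph S).Adj y x := h.symm

/-- no directed path returns to its start. -/
lemma no_dir_cycle {m : ℕ} {g : ℕ → V} (hm : 0 < m)
    (hg : ∀ k < m, T.Arc S (g k) (g (k+1))) (hcyc : g m = g 0) : False := by
  have mono : ∀ k < m, T.dep (g k) ≤ T.dep (g (k+1)) :=
    fun k hk => T.dep_le_choose (hg k hk).2.2
  have upto : ∀ k ≤ m, T.dep (g 0) ≤ T.dep (g k) := by
    intro k hk
    induction k with
    | zero => exact le_refl _
    | succ n ih =>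
      exact le_trans (ih (by omega)) (mono n (by omega))
  have upto2 : ∀ k ≤ m, T.dep (g k) ≤ T.dep (g m) := by
    intro k hk
    have : ∀ j, k + j ≤ m → T.dep (g k) ≤ T.dep (g (k + j)) := by
      intro j
      induction j with
      | zero => intro _; exact le_refl _
      | succ n ih =>
        intro hj
        have h1 := ih (by omega)
        have h2 := mono (k+n) (by omega)
        calc T.dep (g k) ≤ T.dep (g (k+n)) := h1
        _ ≤ T.dep (g (k+n+1)) := h2
        _ = T.dep (g (k + (n+1))) := by ring_nf
    have := this (m - k) (by omega)
    rwa [Nat.add_sub_cancel' hk] at this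
  have alleq : ∀ k ≤ m, T.dep (g k) = T.dep (g 0) := by
    intro k hk
    have h1 := upto k hk
    have h2 := upto2 k hk
    rw [hcyc] at h2
    omega
  rcases Nat.lt_or_ge 1 m with h1 | h1
  · -- m ≥ 2
    have e01 : T.dep (g 0) = T.dep (g 1) := (alleq 1 (by omega)).symm
    have hempty := T.choose_empty_of_dep_eq (hg 0 hm).2.2 e01
    have := (hg 1 h1).2.2
    rw [hempty] at this
    exact this
  · -- m = 1
    have hm1 : m = 1 := by omega
    subst hm1
    have := hg 0 (by omega)
    rw [← hcyc] at this
    exact T.arc_irrefl this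


/- ### counting toolkit -/

/-- the arcs internal to a finite set of vertices -/
def arcsIn (S : Set V) (X : Finset V) : Finset (V × V) :=
  (X ×ˢ X).filter fun q => T.Arc S q.1 q.2

lemma mem_arcsIn {S : Set V} {X : Finset V} {q : V × V} :
    q ∈ T.arcsIn S X ↔ q.1 ∈ X ∧ q.2 ∈ X ∧ T.Arc S q.1 q.2 := by
  simp [arcsIn, Finset.mem_filter, Finset.mem_product, and_assoc]

lemma card_arcsIn_out (S : Set V) (X : Finset V) :
    (T.arcsIn S X).card = ∑ v ∈ X, (X.filter (fun y => T.Arc S v y)).card := by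
  rw [Finset.card_eq_sum_card_fiberwise (f := Prod.fst) (t := X)
    (fun q hq => (T.mem_arcsIn.mp hq).1)]
  refine Finset.sum_congr rfl fun v hv => ?_
  refine Finset.card_nbij' (fun q => q.2) (fun y => (v, y)) ?hi ?hj ?left ?right
  case hi =>
    intro q hq
    simp only [Finset.mem_coe, Finset.mem_filter] at hq ⊢
    obtain ⟨hq1, hq2⟩ := hq
    rw [T.mem_arcsIn] at hq1
    refine ⟨hq1.2.1, ?_⟩
    rw [← hq2]; exact hq1.2.2
  case hj =>
    intro y hy
    simp only [Finset.mem_coe, Finset.mem_filter] at hy ⊢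
    exact ⟨T.mem_arcsIn.mpr ⟨hv, hy.1, hy.2⟩, trivial⟩
  case left =>
    intro q hq
    simp only [Finset.mem_coe, Finset.mem_filter] at hq
    rw [Prod.ext_iff]
    exact ⟨hq.2.symm, rfl⟩
  case right => intro y _; rfl

lemma card_arcsIn_in (S : Set V) (X : Finset V) :
    (T.arcsIn S X).card = ∑ v ∈ X, (X.filter (fun y => T.Arc S y v)).card := by
  rw [Finset.card_eq_sum_card_fiberwise (f := Prod.snd) (t := X)
    (fun q hq => (T.mem_arcsIn.mp hq).2.1)]
  refine Finset.sum_congr rfl fun v hv => ?_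
  refine Finset.card_nbij' (fun q => q.1) (fun y => (y, v)) ?hi ?hj ?left ?right
  case hi =>
    intro q hq
    simp only [Finset.mem_coe, Finset.mem_filter] at hq ⊢
    obtain ⟨hq1, hq2⟩ := hq
    rw [T.mem_arcsIn] at hq1
    refine ⟨hq1.1, ?_⟩
    rw [← hq2]; exact hq1.2.2
  case hj =>
    intro y hy
    simp only [Finset.mem_coe, Finset.mem_filter] at hy ⊢
    exact ⟨T.mem_arcsIn.mpr ⟨hy.1, hv, hy.2⟩, trivial⟩
  case left =>
    intro q hq
    simp only [Finset.mem_coe, Finset.mem_filter] at hq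
    rw [Prod.ext_iff]
    exact ⟨rfl, hq.2.symm⟩
  case right => intro y _; rfl

/-- the adjacent (ordered) pairs internal to a finite set of vertices -/
def adjPairs (S : Set V) (X : Finset V) : Finset (V × V) :=
  (X ×ˢ X).filter fun q => (T.UGraph S).Adj q.1 q.2

lemma mem_adjPairs {S : Set V} {X : Finset V} {q : V × V} :
    q ∈ T.adjPairs S X ↔ q.1 ∈ X ∧ q.2 ∈ X ∧ (T.UGraph S).Adj q.1 q.2 := by
  simp [adjPairs, Finset.mem_filter, Finset.mem_product, and_assoc]

lemma card_adjPairs (S : Set V) (X : Finset V) :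
    (T.adjPairs S X).card = 2 * (T.arcsIn S X).card := by
  have hsplit : T.adjPairs S X = T.arcsIn S X ∪ (T.arcsIn S X).image Prod.swap := by
    ext q
    rw [T.mem_adjPairs, Finset.mem_union, Finset.mem_image]
    constructor
    · rintro ⟨h1, h2, hadj⟩
      rw [T.ugraph_adj] at hadj
      rcases hadj.2 with h | h
      · exact Or.inl (T.mem_arcsIn.mpr ⟨h1, h2, h⟩)
      · refine Or.inr ⟨q.swap, T.mem_arcsIn.mpr ⟨h2, h1, h⟩, Prod.swap_swap q⟩
    · rintro (h | ⟨r, hr, rfl⟩)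
      · rw [T.mem_arcsIn] at h
        refine ⟨h.1, h.2.1, ?_⟩
        rw [T.ugraph_adj]
        exact ⟨T.choose_ne h.2.2.2.2 |>.symm, Or.inl h.2.2⟩
      · rw [T.mem_arcsIn] at hr
        refine ⟨hr.2.1, hr.1, ?_⟩
        rw [T.ugraph_adj]
        exact ⟨T.choose_ne hr.2.2.2.2, Or.inr hr.2.2⟩
  have hdisj : Disjoint (T.arcsIn S X) ((T.arcsIn S X).image Prod.swap) := by
    rw [Finset.disjoint_left]
    rintro q hq hq'
    rw [Finset.mem_image] at hq'
    obtain ⟨r, hr, hrq⟩ := hq'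
    rw [T.mem_arcsIn] at hq hr
    subst hrq
    exact T.arc_asymm hq.2.2 hr.2.2
  have hcard : ((T.arcsIn S X).image Prod.swap).card = (T.arcsIn S X).card :=
    Finset.card_image_of_injective _ Prod.swap_injective
  rw [hsplit, Finset.card_union_of_disjoint hdisj, hcard]
  ring

lemma sum_deg_eq_card_adjPairs (S : Set V) (X : Finset V) :
    ∑ v ∈ X, (X.filter (fun y => (T.UGraph S).Adj v y)).card = (T.adjPairs S X).card := by
  rw [Finset.card_eq_sum_card_fiberwise (f := Prod.fst) (t := X)
    (fun q hq => (T.mem_adjPairs.mp hq).1)]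
  refine Finset.sum_congr rfl fun v hv => ?_
  symm
  refine Finset.card_nbij' (fun q => q.2) (fun y => (v, y)) ?hi ?hj ?left ?right
  case hi =>
    intro q hq
    simp only [Finset.mem_coe, Finset.mem_filter] at hq ⊢
    obtain ⟨hq1, hq2⟩ := hq
    rw [T.mem_adjPairs] at hq1
    refine ⟨hq1.2.1, ?_⟩
    rw [← hq2]; exact hq1.2.2
  case hj =>
    intro y hy
    simp only [Finset.mem_coe, Finset.mem_filter] at hy ⊢
    exact ⟨T.mem_adjPairs.mpr ⟨hv, hy.1, hy.2⟩, trivial⟩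
  case left =>
    intro q hq
    simp only [Finset.mem_coe, Finset.mem_filter] at hq
    rw [Prod.ext_iff]
    exact ⟨hq.2.symm, rfl⟩
  case right => intro y _; rfl

/-- In a finite vertex set where every vertex has at most one out-neighbour,
the number of internal arcs is less than the number of vertices. -/
lemma arcsIn_lt_card {S : Set V} {X : Finset V} (hne : X.Nonempty)
    (hout : ∀ v ∈ X, (X.filter (fun y => T.Arc S v y)).card ≤ 1) :
    (T.arcsIn S X).card < X.card := by
  by_contra hcon
  push_neg at hcon
  have hsum := T.card_arcsIn_out S X
  have hall : ∀ v ∈ X, 0 < (X.filter (fun y => T.Arc S v y)).card := by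
    by_contra hno
    push_neg at hno
    obtain ⟨v0, hv0, h0⟩ := hno
    have h0' : (X.filter (fun y => T.Arc S v0 y)).card = 0 := by omega
    have : ∑ v ∈ X, (X.filter (fun y => T.Arc S v y)).card
        = (X.filter (fun y => T.Arc S v0 y)).card
          + ∑ v ∈ X.erase v0, (X.filter (fun y => T.Arc S v y)).card :=
      (Finset.add_sum_erase X _ hv0).symm
    have hb : ∑ v ∈ X.erase v0, (X.filter (fun y => T.Arc S v y)).card
        ≤ (X.erase v0).card := by
      calc ∑ v ∈ X.erase v0, (X.filter (fun y => T.Arc S v y)).card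
          ≤ ∑ v ∈ X.erase v0, 1 :=
            Finset.sum_le_sum fun v hv => hout v (Finset.mem_of_mem_erase hv)
      _ = (X.erase v0).card := by simp
    have hc : (X.erase v0).card = X.card - 1 := Finset.card_erase_of_mem hv0
    have hXpos : 0 < X.card := Finset.card_pos.mpr hne
    omega
  -- choose an out-neighbour for each vertex
  have hch : ∀ v, v ∈ X → ∃ w, w ∈ X ∧ T.Arc S v w := by
    intro v hv
    obtain ⟨w, hw⟩ := Finset.card_pos.mp (hall v hv)
    rw [Finset.mem_filter] at hw
    exact ⟨w, hw.1, hw.2⟩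
  classical
  set g : V → V := fun v => if h : ∃ w, w ∈ X ∧ T.Arc S v w then h.choose else v with hg
  have hgmem : ∀ v ∈ X, g v ∈ X ∧ T.Arc S v (g v) := by
    intro v hv
    have hex := hch v hv
    simp only [hg, dif_pos hex]
    exact hex.choose_spec
  obtain ⟨v0, hv0⟩ := hne
  have hiter : ∀ k, g^[k] v0 ∈ X := by
    intro k
    induction k with
    | zero => exact hv0
    | succ n ih =>
      rw [Function.iterate_succ_apply']
      exact (hgmem _ ih).1
  have hmaps : ∀ i ∈ Finset.range (X.card + 1), g^[i] v0 ∈ X := fun i _ => hiter i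
  have hlt : X.card < (Finset.range (X.card + 1)).card := by simp
  obtain ⟨i, hi, j, hj, hij, heq⟩ :=
    Finset.exists_ne_map_eq_of_card_lt_of_maps_to hlt hmaps
  rcases Nat.lt_or_ge i j with hlt' | hge
  · refine T.no_dir_cycle (S := S) (m := j - i) (g := fun k => g^[i + k] v0) (by omega) ?_ ?_
    · intro k hk
      show T.Arc S (g^[i + k] v0) (g^[i + (k + 1)] v0)
      have heq2 : i + (k + 1) = (i + k) + 1 := by omega
      rw [heq2, Function.iterate_succ_apply']
      exact (hgmem _ (hiter (i+k))).2
    · show g^[i + (j - i)] v0 = g^[i + 0] v0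
      rw [Nat.add_sub_cancel' (le_of_lt hlt'), Nat.add_zero]
      exact heq.symm
  · have hlt'' : j < i := by omega
    refine T.no_dir_cycle (S := S) (m := i - j) (g := fun k => g^[j + k] v0) (by omega) ?_ ?_
    · intro k hk
      show T.Arc S (g^[j + k] v0) (g^[j + (k + 1)] v0)
      have heq2 : j + (k + 1) = (j + k) + 1 := by omega
      rw [heq2, Function.iterate_succ_apply']
      exact (hgmem _ (hiter (j+k))).2
    · show g^[j + (i - j)] v0 = g^[j + 0] v0
      rw [Nat.add_sub_cancel' (le_of_lt hlt''), Nat.add_zero]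
      exact heq

/- ### reachability exit lemma -/

lemma reach_exit {G : SimpleGraph V} {A : Set V} {P : V → Prop} {x y : V}
    (h : ReachIn G A x y) (hx : ¬ P x) (hy : P y) :
    ∃ u v, u ∈ A ∧ v ∈ A ∧ G.Adj u v ∧ ¬ P u ∧ P v := by
  unfold ReachIn at h
  induction h with
  | refl => exact absurd hy hx
  | @tail b c hab hbc ih =>
    by_cases hb : P b
    · exact ih hb
    · exact ⟨b, c, hbc.1, hbc.2.1, hbc.2.2, hb, hy⟩


/- ### generic cross-pair counting -/

def pairsAdj (S : Set V) (Xa Xb : Finset V) : Finset (V × V) :=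
  (Xa ×ˢ Xb).filter fun p => (T.UGraph S).Adj p.1 p.2

lemma mem_pairsAdj {S : Set V} {Xa Xb : Finset V} {q : V × V} :
    q ∈ T.pairsAdj S Xa Xb ↔ q.1 ∈ Xa ∧ q.2 ∈ Xb ∧ (T.UGraph S).Adj q.1 q.2 := by
  simp [pairsAdj, Finset.mem_filter, Finset.mem_product, and_assoc]

lemma card_pairsAdj_fst (S : Set V) (Xa Xb : Finset V) :
    (T.pairsAdj S Xa Xb).card = ∑ u ∈ Xa, (Xb.filter (fun v => (T.UGraph S).Adj u v)).card := by
  rw [Finset.card_eq_sum_card_fiberwise (f := Prod.fst) (t := Xa)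
    (fun q hq => (T.mem_pairsAdj.mp hq).1)]
  refine Finset.sum_congr rfl fun u hu => ?_
  refine Finset.card_nbij' (fun q => q.2) (fun v => (u, v)) ?hi ?hj ?left ?right
  case hi =>
    intro q hq
    simp only [Finset.mem_coe, Finset.mem_filter] at hq ⊢
    obtain ⟨hq1, hq2⟩ := hq
    rw [T.mem_pairsAdj] at hq1
    exact ⟨hq1.2.1, hq2 ▸ hq1.2.2⟩
  case hj =>
    intro v hv
    simp only [Finset.mem_coe, Finset.mem_filter] at hv ⊢
    exact ⟨T.mem_pairsAdj.mpr ⟨hu, hv.1, hv.2⟩, trivial⟩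
  case left =>
    intro q hq
    simp only [Finset.mem_coe, Finset.mem_filter] at hq
    rw [Prod.ext_iff]
    exact ⟨hq.2.symm, rfl⟩
  case right => intro v _; rfl

lemma card_pairsAdj_snd (S : Set V) (Xa Xb : Finset V) :
    (T.pairsAdj S Xa Xb).card = ∑ v ∈ Xb, (Xa.filter (fun u => (T.UGraph S).Adj u v)).card := by
  rw [Finset.card_eq_sum_card_fiberwise (f := Prod.snd) (t := Xb)
    (fun q hq => (T.mem_pairsAdj.mp hq).2.1)]
  refine Finset.sum_congr rfl fun v hv => ?_
  refine Finset.card_nbij' (fun q => q.1) (fun u => (u, v)) ?hi ?hj ?left ?right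
  case hi =>
    intro q hq
    simp only [Finset.mem_coe, Finset.mem_filter] at hq ⊢
    obtain ⟨hq1, hq2⟩ := hq
    rw [T.mem_pairsAdj] at hq1
    exact ⟨hq1.1, hq2 ▸ hq1.2.2⟩
  case hj =>
    intro u hu
    simp only [Finset.mem_coe, Finset.mem_filter] at hu ⊢
    exact ⟨T.mem_pairsAdj.mpr ⟨hu.1, hv, hu.2⟩, trivial⟩
  case left =>
    intro q hq
    simp only [Finset.mem_coe, Finset.mem_filter] at hq
    rw [Prod.ext_iff]
    exact ⟨rfl, hq.2.symm⟩
  case right => intro u _; rfl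

/- ### hole basics -/

lemma deg_finset {S C : Set V} (hC : T.IsHole S C) {x : V} (hx : x ∈ C) :
    ((hC.2.1.toFinset).filter (fun y => (T.UGraph S).Adj x y)).card = 2 := by
  have h2 := hC.2.2.2.1 x hx
  have hseteq : {y | y ∈ C ∧ (T.UGraph S).Adj x y}
      = ↑((hC.2.1.toFinset).filter (fun y => (T.UGraph S).Adj x y)) := by
    ext u
    simp [Set.Finite.mem_toFinset]
  rw [hseteq, Set.ncard_coe_finset] at h2
  exact h2

lemma two_nbrs {S C : Set V} (hC : T.IsHole S C) {x : V} (hx : x ∈ C) :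
    ∃ z1 z2, z1 ≠ z2 ∧ z1 ∈ C ∧ z2 ∈ C ∧ (T.UGraph S).Adj x z1 ∧ (T.UGraph S).Adj x z2 ∧
      ∀ u ∈ C, (T.UGraph S).Adj x u → (u = z1 ∨ u = z2) := by
  have h2 := hC.2.2.2.1 x hx
  rw [Set.ncard_eq_two] at h2
  obtain ⟨z1, z2, hne, hset⟩ := h2
  have hz1 : z1 ∈ {y | y ∈ C ∧ (T.UGraph S).Adj x y} := by rw [hset]; exact Set.mem_insert _ _
  have hz2 : z2 ∈ {y | y ∈ C ∧ (T.UGraph S).Adj x y} := by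
    rw [hset]; exact Set.mem_insert_iff.mpr (Or.inr rfl)
  refine ⟨z1, z2, hne, hz1.1, hz2.1, hz1.2, hz2.2, ?_⟩
  intro u hu hadj
  have : u ∈ {y | y ∈ C ∧ (T.UGraph S).Adj x y} := ⟨hu, hadj⟩
  rw [hset] at this
  simpa using this

/- ### the structure of a hole around a vertex with a strict descendant in it -/

lemma hole_M {S C : Set V} (hC : T.IsHole S C) {y q : V} (hy : y ∈ C) (hq : q ∈ C)
    (hanc : T.Anc y q) (hne : q ≠ y) :
    ∃ z1 z2 b1 b2,
      z1 ≠ z2 ∧ z1 ∈ C ∧ z2 ∈ C ∧ b1 ∈ C ∧ b2 ∈ C ∧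
      ¬ T.Anc y z1 ∧ ¬ T.Anc y z2 ∧ z1 ≠ y ∧ z2 ≠ y ∧
      T.Arc S z1 y ∧ T.Arc S z2 y ∧
      T.Arc S z1 b1 ∧ T.Arc S z2 b2 ∧
      (T.Anc y b1 ∧ b1 ≠ y) ∧ (T.Anc y b2 ∧ b2 ≠ y) ∧
      (∀ v ∈ C, v = y ∨ v = z1 ∨ v = z2 ∨ (T.Anc y v ∧ v ≠ y)) ∧
      (∀ v ∈ C, (T.UGraph S).Adj y v → (v = z1 ∨ v = z2)) ∧
      (∀ v ∈ C, (T.UGraph S).Adj z1 v → (v = y ∨ v = b1)) ∧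
      (∀ v ∈ C, (T.UGraph S).Adj z2 v → (v = y ∨ v = b2)) := by
  obtain ⟨hsub, hfin, hcard4, hdeg2, hconn⟩ := hC
  have hCpack : T.IsHole S C := ⟨hsub, hfin, hcard4, hdeg2, hconn⟩
  -- no edge between y and its strict descendants in C
  have key1 : ∀ v, T.Anc y v → v ≠ y → ¬ (T.UGraph S).Adj y v := by
    intro v hv hvne hadj
    rw [T.ugraph_adj] at hadj
    rcases hadj.2 with h | h
    · exact T.choose_not_anc1 h.2.2 hv
    · exact (T.choose_stay hv hvne h.2.2).2 rfl
  -- edges into the strict-descendant set cross via y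
  have key2 : ∀ u v, u ∈ C → v ∈ C → T.Anc y v → v ≠ y → ¬ T.Anc y u → u ≠ y →
      (T.UGraph S).Adj u v → T.Arc S u v ∧ T.Arc S u y := by
    intro u v huC hvC hvanc hvne hunotanc hune hadj
    rw [T.ugraph_adj] at hadj
    rcases hadj.2 with h | h
    · have hyu := T.choose_crossing h.2.2 hvanc hunotanc
      exact ⟨h, hsub huC, hsub hy, hyu⟩
    · exact absurd (T.choose_stay hvanc hvne h.2.2).1 hunotanc
  obtain ⟨z1, z2, hzne, hz1C, hz2C, hyz1, hyz2, hycover⟩ := T.two_nbrs hCpack hy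
  have hz1ney : z1 ≠ y := (hyz1.ne).symm
  have hz2ney : z2 ≠ y := (hyz2.ne).symm
  have hz1notanc : ¬ T.Anc y z1 := fun h => key1 z1 h hz1ney hyz1
  have hz2notanc : ¬ T.Anc y z2 := fun h => key1 z2 h hz2ney hyz2
  -- counting the crossing edges
  classical
  set CF := hfin.toFinset with hCF
  have hmemCF : ∀ {v}, v ∈ CF ↔ v ∈ C := fun {v} => Set.Finite.mem_toFinset hfin
  set InF := CF.filter (fun v => T.Anc y v ∧ v ≠ y) with hInF
  have hmemInF : ∀ {v}, v ∈ InF ↔ v ∈ C ∧ T.Anc y v ∧ v ≠ y := by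
    intro v
    rw [hInF, Finset.mem_filter, hmemCF]
  set OutF := CF \ InF with hOutF
  have hmemOutF : ∀ {v}, v ∈ OutF ↔ v ∈ C ∧ ¬ (T.Anc y v ∧ v ≠ y) := by
    intro v
    rw [hOutF, Finset.mem_sdiff, hmemCF, hmemInF]
    tauto
  set N := T.pairsAdj S OutF InF with hN
  -- upper bound: each cross-pair has first coordinate z1 or z2
  have hcrossz : ∀ u v, u ∈ OutF → v ∈ InF → (T.UGraph S).Adj u v → (u = z1 ∨ u = z2) := by
    intro u v hu hv hadj
    rw [hmemOutF] at hu
    rw [hmemInF] at hv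
    have huney : u ≠ y := by
      rintro rfl
      exact key1 v hv.2.1 hv.2.2 hadj
    have hunotanc : ¬ T.Anc y u := fun h => hu.2 ⟨h, huney⟩
    have := key2 u v hu.1 hv.1 hv.2.1 hv.2.2 hunotanc huney hadj
    have hadjy : (T.UGraph S).Adj y u := by
      rw [T.ugraph_adj]
      exact ⟨Ne.symm huney, Or.inr this.2⟩
    exact hycover u hu.1 hadjy
  have hz1mem : z1 ∈ OutF := hmemOutF.mpr ⟨hz1C, fun h => hz1notanc h.1⟩
  have hz2mem : z2 ∈ OutF := hmemOutF.mpr ⟨hz2C, fun h => hz2notanc h.1⟩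
  -- each z has at most one crossing partner
  have hzbound : ∀ z, z ∈ C → (T.UGraph S).Adj y z →
      (InF.filter (fun v => (T.UGraph S).Adj z v)).card ≤ 1 := by
    intro z hzC hadj
    have hsubf : InF.filter (fun v => (T.UGraph S).Adj z v)
        ⊆ (CF.filter (fun v => (T.UGraph S).Adj z v)).erase y := by
      intro v hv
      rw [Finset.mem_filter] at hv
      have hvin := hmemInF.mp hv.1
      rw [Finset.mem_erase, Finset.mem_filter]
      exact ⟨hvin.2.2, hmemCF.mpr hvin.1, hv.2⟩
    have hycard : ((CF.filter (fun v => (T.UGraph S).Adj z v)).erase y).card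
        = (CF.filter (fun v => (T.UGraph S).Adj z v)).card - 1 := by
      apply Finset.card_erase_of_mem
      rw [Finset.mem_filter]
      exact ⟨hmemCF.mpr hy, hadj.symm⟩
    have hdz := T.deg_finset hCpack hzC
    calc (InF.filter (fun v => (T.UGraph S).Adj z v)).card
        ≤ ((CF.filter (fun v => (T.UGraph S).Adj z v)).erase y).card :=
          Finset.card_le_card hsubf
    _ = 1 := by rw [hycard, hdz]
  -- degree split
  have hInsubCF : InF ⊆ CF := Finset.filter_subset _ _
  have hdisjIO : Disjoint InF OutF := Finset.disjoint_sdiff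
  have hdegsplit : ∀ v ∈ InF,
      (InF.filter (fun u => (T.UGraph S).Adj v u)).card
        + (OutF.filter (fun u => (T.UGraph S).Adj v u)).card = 2 := by
    intro v hv
    have hdeg := T.deg_finset hCpack (hmemInF.mp hv).1
    have hunion : CF.filter (fun u => (T.UGraph S).Adj v u)
        = (InF.filter (fun u => (T.UGraph S).Adj v u))
          ∪ (OutF.filter (fun u => (T.UGraph S).Adj v u)) := by
      rw [← Finset.filter_union, hOutF, Finset.union_sdiff_of_subset hInsubCF]
    rw [hunion, Finset.card_union_of_disjoint
      (Finset.disjoint_filter_filter hdisjIO)] at hdeg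
    exact hdeg
  -- the even count
  have hsum2 : 2 * InF.card = 2 * (T.arcsIn S InF).card + N.card := by
    have h1 : ∑ v ∈ InF, ((InF.filter (fun u => (T.UGraph S).Adj v u)).card
        + (OutF.filter (fun u => (T.UGraph S).Adj v u)).card) = ∑ _v ∈ InF, 2 :=
      Finset.sum_congr rfl hdegsplit
    rw [Finset.sum_add_distrib] at h1
    have h2 : ∑ v ∈ InF, (InF.filter (fun u => (T.UGraph S).Adj v u)).card
        = 2 * (T.arcsIn S InF).card := by
      rw [T.sum_deg_eq_card_adjPairs, T.card_adjPairs]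
    have h3 : ∑ v ∈ InF, (OutF.filter (fun u => (T.UGraph S).Adj v u)).card = N.card := by
      rw [hN, T.card_pairsAdj_snd]
      refine Finset.sum_congr rfl fun v hv => ?_
      congr 1
      ext u
      simp only [Finset.mem_filter, and_congr_right_iff]
      intro _
      exact ⟨fun h => h.symm, fun h => h.symm⟩
    have h4 : ∑ _v ∈ InF, 2 = 2 * InF.card := by
      rw [Finset.sum_const, smul_eq_mul, Nat.mul_comm]
    rw [h2, h3, h4] at h1
    omega
  -- upper bound
  have hNfst : N.card = ∑ u ∈ OutF, (InF.filter (fun v => (T.UGraph S).Adj u v)).card := by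
    rw [hN, T.card_pairsAdj_fst]
  have hsupp : ∀ u ∈ OutF,
      (InF.filter (fun v => (T.UGraph S).Adj u v)).card ≠ 0 → (u = z1 ∨ u = z2) := by
    intro u hu hf
    obtain ⟨v, hv⟩ := Finset.card_pos.mp (Nat.pos_of_ne_zero hf)
    rw [Finset.mem_filter] at hv
    exact hcrossz u v hu hv.1 hv.2
  have hNle : N.card ≤ 2 := by
    rw [hNfst, ← Finset.sum_filter_of_ne hsupp]
    have hsub12 : OutF.filter (fun u => u = z1 ∨ u = z2) ⊆ {z1, z2} := by
      intro u hu
      rw [Finset.mem_filter] at hu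
      simp only [Finset.mem_insert, Finset.mem_singleton]
      exact hu.2
    calc ∑ u ∈ OutF.filter (fun u => u = z1 ∨ u = z2),
          (InF.filter (fun v => (T.UGraph S).Adj u v)).card
        ≤ ∑ _u ∈ OutF.filter (fun u => u = z1 ∨ u = z2), 1 := by
          refine Finset.sum_le_sum fun u hu => ?_
          rw [Finset.mem_filter] at hu
          rcases hu.2 with rfl | rfl
          · exact hzbound _ hz1C hyz1
          · exact hzbound _ hz2C hyz2
    _ = (OutF.filter (fun u => u = z1 ∨ u = z2)).card := by simp
    _ ≤ ({z1, z2} : Finset V).card := Finset.card_le_card hsub12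
    _ ≤ 2 := Finset.card_insert_le _ _ |>.trans (by simp)
  -- lower bound via connectivity
  have hNpos : 1 ≤ N.card := by
    have hreach := hconn y hy q hq
    obtain ⟨u, v, huC, hvC, hadj, hPu, hPv⟩ :=
      reach_exit (P := fun w => T.Anc y w ∧ w ≠ y) hreach
        (fun h => h.2 rfl) ⟨hanc, hne⟩
    apply Finset.card_pos.mpr
    refine ⟨(u, v), T.mem_pairsAdj.mpr ⟨hmemOutF.mpr ⟨huC, hPu⟩, hmemInF.mpr ⟨hvC, hPv⟩, hadj⟩⟩
  have hN2 : N.card = 2 := by omega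
  -- each z has a crossing partner
  have hbex : ∀ zi zj, zi = z1 ∧ zj = z2 ∨ zi = z2 ∧ zj = z1 →
      ∃ b, b ∈ C ∧ T.Anc y b ∧ b ≠ y ∧ (T.UGraph S).Adj zi b := by
    intro zi zj hij
    by_contra hno
    push_neg at hno
    have hfz : (InF.filter (fun v => (T.UGraph S).Adj zi v)).card = 0 := by
      rw [Finset.card_eq_zero, Finset.filter_eq_empty_iff]
      intro v hv
      have hvin := hmemInF.mp hv
      exact fun hadj => (hno v hvin.1 hvin.2.1 hvin.2.2) hadj
    have hsupp' : ∀ u ∈ OutF,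
        (InF.filter (fun v => (T.UGraph S).Adj u v)).card ≠ 0 → (u = zj) := by
      intro u hu hf
      have := hsupp u hu hf
      rcases hij with ⟨rfl, rfl⟩ | ⟨rfl, rfl⟩
      · rcases this with rfl | rfl
        · exact absurd hfz hf
        · rfl
      · rcases this with rfl | rfl
        · rfl
        · exact absurd hfz hf
    have : N.card ≤ 1 := by
      rw [hNfst, ← Finset.sum_filter_of_ne hsupp']
      have hsubj : OutF.filter (fun u => u = zj) ⊆ {zj} := by
        intro u hu
        rw [Finset.mem_filter] at hu
        simp only [Finset.mem_singleton]
        exact hu.2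
      calc ∑ u ∈ OutF.filter (fun u => u = zj),
            (InF.filter (fun v => (T.UGraph S).Adj u v)).card
          ≤ ∑ _u ∈ OutF.filter (fun u => u = zj), 1 := by
            refine Finset.sum_le_sum fun u hu => ?_
            rw [Finset.mem_filter] at hu
            obtain ⟨hu1, hu2⟩ := hu
            subst hu2
            rcases hij with ⟨rfl, rfl⟩ | ⟨rfl, rfl⟩
            · exact hzbound _ hz2C hyz2
            · exact hzbound _ hz1C hyz1
      _ = (OutF.filter (fun u => u = zj)).card := by simp
      _ ≤ ({zj} : Finset V).card := Finset.card_le_card hsubj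
      _ ≤ 1 := by simp
    omega
  obtain ⟨b1, hb1C, hb1anc, hb1ney, hb1adj⟩ := hbex z1 z2 (Or.inl ⟨rfl, rfl⟩)
  obtain ⟨b2, hb2C, hb2anc, hb2ney, hb2adj⟩ := hbex z2 z1 (Or.inr ⟨rfl, rfl⟩)
  -- arcs
  have harc1 := key2 z1 b1 hz1C hb1C hb1anc hb1ney hz1notanc hz1ney hb1adj
  have harc2 := key2 z2 b2 hz2C hb2C hb2anc hb2ney hz2notanc hz2ney hb2adj
  -- neighbourhood of each z
  have hzcov : ∀ z b, z ∈ C → b ∈ C → (T.UGraph S).Adj y z → (T.UGraph S).Adj z b →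
      T.Anc y b → b ≠ y →
      ∀ v ∈ C, (T.UGraph S).Adj z v → (v = y ∨ v = b) := by
    intro z b hzC hbC hadjyz hadjzb hbanc hbney
    obtain ⟨w1, w2, hwne, hw1C, hw2C, hzw1, hzw2, hwcov⟩ := T.two_nbrs hCpack hzC
    have hyw := hwcov y hy hadjyz.symm
    have hbw := hwcov b hbC hadjzb
    have hyb : y ≠ b := Ne.symm hbney
    intro v hvC hadjzv
    have hvw := hwcov v hvC hadjzv
    rcases hyw with rfl | rfl
    · rcases hbw with rfl | rfl
      · exact absurd rfl hyb
      · tauto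
    · rcases hbw with rfl | rfl
      · tauto
      · exact absurd rfl hyb
  have hzcov1 := hzcov z1 b1 hz1C hb1C hyz1 hb1adj hb1anc hb1ney
  have hzcov2 := hzcov z2 b2 hz2C hb2C hyz2 hb2adj hb2anc hb2ney
  -- the partition of C
  have hpart : ∀ v ∈ C, v = y ∨ v = z1 ∨ v = z2 ∨ (T.Anc y v ∧ v ≠ y) := by
    by_contra hnp
    push_neg at hnp
    obtain ⟨o, hoC, ho⟩ := hnp
    have hreach := hconn o hoC y hy
    obtain ⟨u, v, huC, hvC, hadj, hPu, hPv⟩ :=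
      reach_exit (P := fun w => w = y ∨ w = z1 ∨ w = z2 ∨ (T.Anc y w ∧ w ≠ y))
        hreach (by tauto) (Or.inl rfl)
    rcases hPv with rfl | rfl | rfl | hvIn
    · have := hycover u huC hadj.symm
      tauto
    · have := hzcov1 u huC hadj.symm
      rcases this with rfl | rfl
      · tauto
      · exact hPu (Or.inr (Or.inr (Or.inr ⟨hb1anc, hb1ney⟩)))
    · have := hzcov2 u huC hadj.symm
      rcases this with rfl | rfl
      · tauto
      · exact hPu (Or.inr (Or.inr (Or.inr ⟨hb2anc, hb2ney⟩)))
    · have huney : u ≠ y := fun h => hPu (Or.inl h)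
      have hunotanc : ¬ T.Anc y u := fun h => hPu (Or.inr (Or.inr (Or.inr ⟨h, huney⟩)))
      have := key2 u v huC hvC hvIn.1 hvIn.2 hunotanc huney hadj
      have hadjy : (T.UGraph S).Adj y u := by
        rw [T.ugraph_adj]
        exact ⟨Ne.symm huney, Or.inr this.2⟩
      have := hycover u huC hadjy
      tauto
  exact ⟨z1, z2, b1, b2, hzne, hz1C, hz2C, hb1C, hb2C, hz1notanc, hz2notanc,
    hz1ney, hz2ney, harc1.2, harc2.2, harc1.1, harc2.1,
    ⟨hb1anc, hb1ney⟩, ⟨hb2anc, hb2ney⟩, hpart, hycover, hzcov1, hzcov2⟩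


/- ### every hole contains a strict ancestor pair -/

lemma hole_card_eq {S C : Set V} (hC : T.IsHole S C) :
    C.ncard = (hC.2.1.toFinset).card := Set.ncard_eq_toFinset_card C hC.2.1

lemma hole_arcs_eq {S C : Set V} (hC : T.IsHole S C) :
    (T.arcsIn S (hC.2.1.toFinset)).card = (hC.2.1.toFinset).card := by
  set CF := hC.2.1.toFinset with hCF
  have hdegs : ∀ v ∈ CF, (CF.filter (fun y => (T.UGraph S).Adj v y)).card = 2 := by
    intro v hv
    exact T.deg_finset hC (Set.Finite.mem_toFinset _ |>.mp hv)
  have h1 : ∑ v ∈ CF, (CF.filter (fun y => (T.UGraph S).Adj v y)).card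
      = 2 * (T.arcsIn S CF).card := by
    rw [T.sum_deg_eq_card_adjPairs, T.card_adjPairs]
  have h2 : ∑ v ∈ CF, (CF.filter (fun y => (T.UGraph S).Adj v y)).card
      = 2 * CF.card := by
    rw [Finset.sum_congr rfl hdegs, Finset.sum_const, smul_eq_mul, Nat.mul_comm]
  omega

lemma hole_has_pair {S C : Set V} (hC : T.IsHole S C) :
    ∃ y ∈ C, ∃ q ∈ C, T.Anc y q ∧ q ≠ y := by
  by_contra hno
  push_neg at hno
  set CF := hC.2.1.toFinset with hCF
  have hmemCF : ∀ {v}, v ∈ CF ↔ v ∈ C := fun {v} => Set.Finite.mem_toFinset hC.2.1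
  have hne : CF.Nonempty := by
    rw [← Finset.card_pos]
    have h4 := hC.2.2.1
    rw [T.hole_card_eq hC, ← hCF] at h4
    omega
  have hout : ∀ v ∈ CF, (CF.filter (fun y => T.Arc S v y)).card ≤ 1 := by
    intro v hv
    rw [Finset.card_le_one]
    intro a ha b hb
    rw [Finset.mem_filter] at ha hb
    rcases T.choose_chain ha.2.2.2 hb.2.2.2 with h | h
    · exact (hno a (hmemCF.mp ha.1) b (hmemCF.mp hb.1) h).symm
    · exact hno b (hmemCF.mp hb.1) a (hmemCF.mp ha.1) h
  have hlt := T.arcsIn_lt_card hne hout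
  have harc := T.hole_arcs_eq hC
  rw [← hCF] at harc
  omega

/- ### the full structure of a hole -/

lemma hole_struct {S C : Set V} (hC : T.IsHole S C) :
    ∃ p z1 z2 b1 b2,
      p ∈ C ∧ z1 ≠ z2 ∧ z1 ∈ C ∧ z2 ∈ C ∧ b1 ∈ C ∧ b2 ∈ C ∧
      ¬ T.Anc p z1 ∧ ¬ T.Anc p z2 ∧ z1 ≠ p ∧ z2 ≠ p ∧
      T.Arc S z1 p ∧ T.Arc S z2 p ∧
      T.Arc S z1 b1 ∧ T.Arc S z2 b2 ∧
      (T.Anc p b1 ∧ b1 ≠ p) ∧ (T.Anc p b2 ∧ b2 ≠ p) ∧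
      (∀ v ∈ C, v = p ∨ v = z1 ∨ v = z2 ∨ (T.Anc p v ∧ v ≠ p)) ∧
      (∀ v ∈ C, (T.UGraph S).Adj p v → (v = z1 ∨ v = z2)) ∧
      (∀ v ∈ C, (T.UGraph S).Adj z1 v → (v = p ∨ v = b1)) ∧
      (∀ v ∈ C, (T.UGraph S).Adj z2 v → (v = p ∨ v = b2)) ∧
      (∀ y' ∈ C, (∃ q ∈ C, T.Anc y' q ∧ q ≠ y') → y' = p) := by
  obtain ⟨y, hy, q, hq, hanc, hqney⟩ := T.hole_has_pair hC
  obtain ⟨z1, z2, b1, b2, hzne, hz1C, hz2C, hb1C, hb2C, hz1na, hz2na, hz1ny, hz2ny,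
    ha1, ha2, hab1, hab2, hb1, hb2, hpart, hcovp, hcov1, hcov2⟩ := T.hole_M hC hy hq hanc hqney
  refine ⟨y, z1, z2, b1, b2, hy, hzne, hz1C, hz2C, hb1C, hb2C, hz1na, hz2na, hz1ny, hz2ny,
    ha1, ha2, hab1, hab2, hb1, hb2, hpart, hcovp, hcov1, hcov2, ?_⟩
  intro y' hy' ⟨q', hq', hanc', hq'ne⟩
  rcases hpart y' hy' with rfl | rfl | rfl | hIn
  · rfl
  -- y' = z1
  · exfalso
    rcases hpart q' hq' with rfl | rfl | rfl | hIn'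
    · exact T.choose_not_anc1 ha1.2.2 hanc'
    · exact hq'ne rfl
    · exact T.no_common_out hanc' hq'ne.symm ha1.2.2 ha2.2.2
    · rcases T.anc_total_of_common hIn'.1 hanc' with h | h
      · exact hz1na h
      · exact T.choose_not_anc1 ha1.2.2 h
  -- y' = z2
  · exfalso
    rcases hpart q' hq' with rfl | rfl | rfl | hIn'
    · exact T.choose_not_anc1 ha2.2.2 hanc'
    · exact T.no_common_out hanc' hq'ne.symm ha2.2.2 ha1.2.2
    · exact hq'ne rfl
    · rcases T.anc_total_of_common hIn'.1 hanc' with h | h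
      · exact hz2na h
      · exact T.choose_not_anc1 ha2.2.2 h
  -- y' strictly below y: apply hole_M at y'
  · exfalso
    obtain ⟨w1, w2, c1, c2, -, -, -, -, -, -, -, -, -, ha1', ha2', -, -, -, -, hpart', -, -, -⟩ :=
      T.hole_M hC hy' hq' hanc' hq'ne
    rcases hpart' y hy with heq | rfl | rfl | hIn'
    · exact hIn.2 heq.symm
    · exact T.choose_not_anc1 ha1'.2.2 hIn.1
    · exact T.choose_not_anc1 ha2'.2.2 hIn.1
    · exact hIn.2 (T.anc_antisymm hIn.1 hIn'.1).symm


/- ### the wheel theorem -/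

theorem wheel_false {S C : Set V} {c : V} (hc : c ∉ C) (hS : S = insert c C)
    (hhole : T.IsHole S C)
    (hdeg : 3 ≤ ({y | y ∈ C ∧ (T.UGraph S).Adj c y}).ncard) : False := by
  obtain ⟨hsub, hfin, hcard4, hdeg2, hconn⟩ := hhole
  have hhole' : T.IsHole S C := ⟨hsub, hfin, hcard4, hdeg2, hconn⟩
  obtain ⟨p, z1, z2, b1, b2, hpC, hzne, hz1C, hz2C, hb1C, hb2C, hz1na, hz2na, hz1np, hz2np,
    ha1, ha2, hab1, hab2, hb1in, hb2in, hpart, hcovp, hcov1, hcov2, huniq⟩ :=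
    T.hole_struct hhole'
  have hcS : c ∈ S := hS ▸ Set.mem_insert c C
  have hCS : ∀ {v}, v ∈ C → v ∈ S := fun hv => hsub hv
  have hcne : ∀ {v}, v ∈ C → v ≠ c := fun hv h => hc (h ▸ hv)
  have hadjcase : ∀ {v}, v ∈ C → (T.UGraph S).Adj c v → T.Arc S c v ∨ T.Arc S v c := by
    intro v hv hadj
    rw [T.ugraph_adj] at hadj
    tauto
  have hupper : ∀ a b, a ∈ C → b ∈ C → a ≠ b → T.Anc a b → a = p :=
    fun a b ha hb hne h => huniq a ha ⟨b, hb, h, Ne.symm hne⟩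
  -- three distinct neighbours of c
  have hNfin : ({y | y ∈ C ∧ (T.UGraph S).Adj c y}).Finite :=
    hfin.subset (fun v hv => hv.1)
  obtain ⟨n1, n2, n3, hn1, hn2, hn3, hne12, hne13, hne23⟩ : ∃ n1 n2 n3,
      (n1 ∈ C ∧ (T.UGraph S).Adj c n1) ∧ (n2 ∈ C ∧ (T.UGraph S).Adj c n2) ∧
      (n3 ∈ C ∧ (T.UGraph S).Adj c n3) ∧ n1 ≠ n2 ∧ n1 ≠ n3 ∧ n2 ≠ n3 := by
    have h3 : 2 < (hNfin.toFinset).card := by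
      rw [← Set.ncard_eq_toFinset_card _ hNfin]
      omega
    rw [Finset.two_lt_card_iff] at h3
    obtain ⟨a, b, d, ha, hb, hd, hab, had, hbd⟩ := h3
    rw [Set.Finite.mem_toFinset] at ha hb hd
    exact ⟨a, b, d, ha, hb, hd, hab, had, hbd⟩
  -- kill three distinct out-neighbours
  have hK3 : ∀ t1 t2 t3, t1 ∈ C → t2 ∈ C → t3 ∈ C → t1 ≠ t2 → t1 ≠ t3 → t2 ≠ t3 →
      T.Arc S c t1 → T.Arc S c t2 → T.Arc S c t3 → False := by
    intro t1 t2 t3 h1 h2 h3 n12 n13 n23 a1 a2 a3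
    have u12 : t1 = p ∨ t2 = p := by
      rcases T.choose_chain a1.2.2 a2.2.2 with h | h
      · exact Or.inl (hupper t1 t2 h1 h2 n12 h)
      · exact Or.inr (hupper t2 t1 h2 h1 (Ne.symm n12) h)
    have u13 : t1 = p ∨ t3 = p := by
      rcases T.choose_chain a1.2.2 a3.2.2 with h | h
      · exact Or.inl (hupper t1 t3 h1 h3 n13 h)
      · exact Or.inr (hupper t3 t1 h3 h1 (Ne.symm n13) h)
    have u23 : t2 = p ∨ t3 = p := by
      rcases T.choose_chain a2.2.2 a3.2.2 with h | h
      · exact Or.inl (hupper t2 t3 h2 h3 n23 h)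
      · exact Or.inr (hupper t3 t2 h3 h2 (Ne.symm n23) h)
    rcases u12 with h1p | h2p
    · rcases u23 with h2p | h3p
      · exact n12 (h1p.trans h2p.symm)
      · exact n13 (h1p.trans h3p.symm)
    · rcases u13 with h1p | h3p
      · exact n12 (h1p.trans h2p.symm)
      · exact n23 (h2p.trans h3p.symm)
  -- kill two distinct out-neighbours
  have hK2 : (∃ t1 t2, t1 ∈ C ∧ t2 ∈ C ∧ t1 ≠ t2 ∧ T.Arc S c t1 ∧ T.Arc S c t2) → False := by
    rintro ⟨t1, t2, ht1, ht2, htne, hct1, hct2⟩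
    have hp' : T.Arc S c p := by
      rcases T.choose_chain hct1.2.2 hct2.2.2 with h | h
      · have := hupper t1 t2 ht1 ht2 htne h; exact this ▸ hct1
      · have := hupper t2 t1 ht2 ht1 (Ne.symm htne) h; exact this ▸ hct2
    have hnoin : ∀ w ∈ C, ¬ T.Arc S w c := by
      intro w hw harc
      rcases hpart w hw with rfl | rfl | rfl | hIn
      · exact T.arc_asymm harc hp'
      · rcases T.choose_chain harc.2.2 ha1.2.2 with h | h
        · exact T.choose_not_anc1 hp'.2.2 h
        · exact T.choose_not_anc2 hp'.2.2 h
      · rcases T.choose_chain harc.2.2 ha2.2.2 with h | h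
        · exact T.choose_not_anc1 hp'.2.2 h
        · exact T.choose_not_anc2 hp'.2.2 h
      · exact T.choose_not_anc2 hp'.2.2 (T.choose_stay hIn.1 hIn.2 harc.2.2).1
    have hno : ∀ {v}, v ∈ C → (T.UGraph S).Adj c v → T.Arc S c v :=
      fun {v} hv hadj => (hadjcase hv hadj).resolve_right (hnoin _ hv)
    exact hK3 n1 n2 n3 hn1.1 hn2.1 hn3.1 hne12 hne13 hne23
      (hno hn1.1 hn1.2) (hno hn2.1 hn2.2) (hno hn3.1 hn3.2)
  have houts : ∀ t1 t2, t1 ∈ C → t2 ∈ C → T.Arc S c t1 → T.Arc S c t2 → t1 = t2 := by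
    intro t1 t2 h1 h2 a1 a2
    by_contra hne'
    exact hK2 ⟨t1, t2, h1, h2, hne', a1, a2⟩
  -- at least two in-neighbours
  have hins : ∃ w1 w2, w1 ∈ C ∧ w2 ∈ C ∧ w1 ≠ w2 ∧ T.Arc S w1 c ∧ T.Arc S w2 c := by
    rcases hadjcase hn1.1 hn1.2 with o1 | i1 <;>
      rcases hadjcase hn2.1 hn2.2 with o2 | i2 <;>
      rcases hadjcase hn3.1 hn3.2 with o3 | i3
    · exact absurd (houts n1 n2 hn1.1 hn2.1 o1 o2) hne12
    · exact absurd (houts n1 n2 hn1.1 hn2.1 o1 o2) hne12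
    · exact absurd (houts n1 n3 hn1.1 hn3.1 o1 o3) hne13
    · exact ⟨n2, n3, hn2.1, hn3.1, hne23, i2, i3⟩
    · exact absurd (houts n2 n3 hn2.1 hn3.1 o2 o3) hne23
    · exact ⟨n1, n3, hn1.1, hn3.1, hne13, i1, i3⟩
    · exact ⟨n1, n2, hn1.1, hn2.1, hne12, i1, i2⟩
    · exact ⟨n1, n2, hn1.1, hn2.1, hne12, i1, i2⟩
  -- p is not an in-neighbour
  have hpno : ¬ T.Arc S p c := by
    intro harc
    obtain ⟨w1, w2, hw1, hw2, hwne, hw1a, hw2a⟩ := hins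
    have hallp : ∀ w ∈ C, T.Arc S w c → w = p := by
      intro w hw ha
      rcases hpart w hw with rfl | rfl | rfl | hIn
      · rfl
      · exfalso
        rcases T.choose_chain ha.2.2 ha1.2.2 with h | h
        · exact T.choose_not_anc2 harc.2.2 h
        · exact T.choose_not_anc1 harc.2.2 h
      · exfalso
        rcases T.choose_chain ha.2.2 ha2.2.2 with h | h
        · exact T.choose_not_anc2 harc.2.2 h
        · exact T.choose_not_anc1 harc.2.2 h
      · exact absurd (T.choose_stay hIn.1 hIn.2 ha.2.2).1 (T.choose_not_anc1 harc.2.2)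
    exact hwne ((hallp w1 hw1 hw1a).trans (hallp w2 hw2 hw2a).symm)
  -- the position of c : strictly below p
  have hcnep : c ≠ p := fun h => hc (h ▸ hpC)
  have hpos : T.Anc p c := by
    by_cases hwIn : ∃ w ∈ C, (T.Anc p w ∧ w ≠ p) ∧ T.Arc S w c
    · obtain ⟨w, hw, hIn, ha⟩ := hwIn
      exact (T.choose_stay hIn.1 hIn.2 ha.2.2).1
    · push_neg at hwIn
      obtain ⟨w1, w2, hw1, hw2, hwne, hw1a, hw2a⟩ := hins
      have hz : ∀ w ∈ C, T.Arc S w c → w = z1 ∨ w = z2 := by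
        intro w hw ha
        rcases hpart w hw with rfl | rfl | rfl | hIn
        · exact absurd ha hpno
        · exact Or.inl rfl
        · exact Or.inr rfl
        · exact absurd ha (hwIn w hw hIn)
      have hzz : T.Arc S z1 c ∧ T.Arc S z2 c := by
        rcases hz w1 hw1 hw1a with rfl | rfl <;> rcases hz w2 hw2 hw2a with h | h
        · exact absurd h.symm hwne
        · exact ⟨hw1a, h ▸ hw2a⟩
        · exact ⟨h ▸ hw2a, hw1a⟩
        · exact absurd h.symm hwne
      rcases T.choose_chain hzz.1.2.2 ha1.2.2 with h | h
      · exfalso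
        have hex_out : ∃ t ∈ C, T.Arc S c t := by
          by_contra hno
          push_neg at hno
          have f : ∀ {v}, v ∈ C → (T.UGraph S).Adj c v → v = z1 ∨ v = z2 :=
            fun {v} hv hadj => hz _ hv ((hadjcase hv hadj).resolve_left (hno _ hv))
          rcases f hn1.1 hn1.2 with h1 | h1 <;> rcases f hn2.1 hn2.2 with h2 | h2 <;>
            rcases f hn3.1 hn3.2 with h3 | h3
          · exact hne12 (h1.trans h2.symm)
          · exact hne12 (h1.trans h2.symm)
          · exact hne13 (h1.trans h3.symm)
          · exact hne23 (h2.trans h3.symm)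
          · exact hne23 (h2.trans h3.symm)
          · exact hne13 (h1.trans h3.symm)
          · exact hne12 (h1.trans h2.symm)
          · exact hne12 (h1.trans h2.symm)
        obtain ⟨t, htC, hat⟩ := hex_out
        rcases hpart t htC with rfl | rfl | rfl | hIn
        · exact T.choose_not_anc1 hat.2.2 h
        · exact T.arc_asymm hat hzz.1
        · exact T.arc_asymm hat hzz.2
        · exact T.choose_not_anc1 hat.2.2 (T.anc_trans h hIn.1)
      · exact h
  -- no vertex of C other than p is an ancestor of c
  have hanccp : ∀ g ∈ C, T.Anc g c → g = p := by
    intro g hg hganc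
    have hgne : g ≠ c := hcne hg
    by_cases hexout : ∃ t ∈ C, T.Arc S c t
    · obtain ⟨t, htC, hat⟩ := hexout
      have hcroot : c ≠ T.root := by
        intro h
        have hd := T.dep_anc_lt hpos hcnep.symm
        rw [h, T.dep_root] at hd
        omega
      have h1 : T.Anc g (T.parent c) := T.anc_parent_of_ne hganc hgne
      obtain ⟨hLr, hLp⟩ := T.lastBorn_child (T.parent c) c hcroot rfl
      have h2 : T.Anc g (T.lastBorn (T.parent c)) := by
        have h3 := T.anc_parent (T.lastBorn (T.parent c))
        rw [hLp] at h3
        exact T.anc_trans h1 h3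
      have h4 : T.Anc g t := T.anc_trans h2 (T.choose_anc_L hat.2.2)
      have h5 : t ≠ g := by
        rintro rfl
        exact T.choose_not_anc2 hat.2.2 hganc
      exact huniq g hg ⟨t, htC, h4, h5⟩
    · push_neg at hexout
      by_cases hgp : g = p
      · exact hgp
      exfalso
      have hall_in : ∀ {v}, v ∈ C → (T.UGraph S).Adj c v → T.Arc S v c :=
        fun {v} hv hadj => (hadjcase hv hadj).resolve_left (hexout _ hv)
      have hkey : ∀ w ∈ C, T.Arc S w c → (T.UGraph S).Adj g w := by
        intro w hw haw
        by_cases hgw : T.Anc g w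
        · exfalso
          have hwg : w ≠ g := by
            rintro rfl
            exact T.choose_not_anc1 haw.2.2 hganc
          exact hgp (huniq g hg ⟨w, hw, hgw, hwg⟩)
        · have hmem := T.choose_crossing haw.2.2 hganc hgw
          have harc : T.Arc S w g := ⟨haw.1, hCS hg, hmem⟩
          rw [T.ugraph_adj]
          refine ⟨?_, Or.inr harc⟩
          rintro rfl
          exact hgw (T.anc_refl g)
      obtain ⟨u1, u2, hu12, _, _, _, _, hucov⟩ := T.two_nbrs hhole' hg
      have e1 := hucov n1 hn1.1 (hkey n1 hn1.1 (hall_in hn1.1 hn1.2))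
      have e2 := hucov n2 hn2.1 (hkey n2 hn2.1 (hall_in hn2.1 hn2.2))
      have e3 := hucov n3 hn3.1 (hkey n3 hn3.1 (hall_in hn3.1 hn3.2))
      rcases e1 with h1 | h1 <;> rcases e2 with h2 | h2 <;> rcases e3 with h3 | h3
      · exact hne12 (h1.trans h2.symm)
      · exact hne12 (h1.trans h2.symm)
      · exact hne13 (h1.trans h3.symm)
      · exact hne23 (h2.trans h3.symm)
      · exact hne23 (h2.trans h3.symm)
      · exact hne13 (h1.trans h3.symm)
      · exact hne12 (h1.trans h2.symm)
      · exact hne12 (h1.trans h2.symm)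
  -- the z / descendant correspondence
  have hziff1 : T.Arc S z1 c ↔ T.Anc c b1 := by
    constructor
    · intro hzc
      rcases T.choose_chain hzc.2.2 hab1.2.2 with h | h
      · exact h
      · exact absurd (hanccp b1 hb1C h) hb1in.2
    · intro hcb
      have hLc : T.Anc (T.lastBorn (T.parent z1)) c :=
        T.anc_trans (T.choose_anc_L ha1.2.2) hpos
      exact ⟨ha1.1, hcS, T.choose_interval hab1.2.2 hLc hcb⟩
  have hziff2 : T.Arc S z2 c ↔ T.Anc c b2 := by
    constructor
    · intro hzc
      rcases T.choose_chain hzc.2.2 hab2.2.2 with h | h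
      · exact h
      · exact absurd (hanccp b2 hb2C h) hb2in.2
    · intro hcb
      have hLc : T.Anc (T.lastBorn (T.parent z2)) c :=
        T.anc_trans (T.choose_anc_L ha2.2.2) hpos
      exact ⟨ha2.1, hcS, T.choose_interval hab2.2.2 hLc hcb⟩
  -- out-neighbours in C of an in-neighbour of c lie strictly below c
  have hwout : ∀ w, w ∈ C → T.Anc p w → w ≠ p → T.Arc S w c → ∀ x ∈ C, T.Arc S w x →
      T.Anc c x := by
    intro w hw hpw hwp hwc x hx hwx
    rcases T.choose_chain hwc.2.2 hwx.2.2 with h | h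
    · exact h
    · exfalso
      have hxp := hanccp x hx h
      subst hxp
      exact (T.choose_stay hpw hwp hwx.2.2).2 rfl
  -- vertices of the inside have at most one out-neighbour in C
  have houtIn : ∀ w ∈ C, ∀ x1 ∈ C, ∀ x2 ∈ C, w ≠ p → T.Anc p w →
      T.Arc S w x1 → T.Arc S w x2 → x1 = x2 := by
    intro w hw x1 hx1 x2 hx2 hwp hpw a1 a2
    by_contra hne'
    rcases T.choose_chain a1.2.2 a2.2.2 with h | h
    · exact (T.choose_stay hpw hwp a1.2.2).2 (hupper x1 x2 hx1 hx2 hne' h)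
    · exact (T.choose_stay hpw hwp a2.2.2).2 (hupper x2 x1 hx2 hx1 (Ne.symm hne') h)
  -- out-neighbours of c lie in the inside, not below c
  have houtc : ∀ t ∈ C, T.Arc S c t → (T.Anc p t ∧ t ≠ p) ∧ ¬ T.Anc c t := by
    intro t htC hat
    have hstay := T.choose_stay hpos hcnep hat.2.2
    exact ⟨hstay, T.choose_not_anc1 hat.2.2⟩
  -- the final counting
  classical
  set CF := hfin.toFinset with hCF
  have hmemCF : ∀ {v}, v ∈ CF ↔ v ∈ C := fun {v} => Set.Finite.mem_toFinset hfin
  set InF := CF.filter (fun v => T.Anc p v ∧ v ≠ p) with hInF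
  set OF := InF.filter (fun v => ¬ T.Anc c v) with hOF
  have hmemOF : ∀ {v}, v ∈ OF ↔ v ∈ C ∧ (T.Anc p v ∧ v ≠ p) ∧ ¬ T.Anc c v := by
    intro v
    rw [hOF, Finset.mem_filter, hInF, Finset.mem_filter, hmemCF]
    tauto
  set QF := insert c OF with hQF
  have hcOF : c ∉ OF := fun h => hc (hmemOF.mp h).1
  set WcF := OF.filter (fun w => T.Arc S w c) with hWcF
  set TcF := OF.filter (fun t => T.Arc S c t) with hTcF
  set ZF := ({z1, z2} : Finset V).filter (fun z => T.Arc S z c) with hZF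
  set IcF := InF.filter (fun v => T.Anc c v) with hIcF
  have hmemIcF : ∀ {v}, v ∈ IcF ↔ v ∈ C ∧ (T.Anc p v ∧ v ≠ p) ∧ T.Anc c v := by
    intro v
    rw [hIcF, Finset.mem_filter, hInF, Finset.mem_filter, hmemCF]
    tauto
  -- (c1) neighbour count
  have hcount3 : 3 ≤ WcF.card + ZF.card + TcF.card := by
    have hnmem : ∀ {v}, v ∈ C → (T.UGraph S).Adj c v → v ∈ WcF ∪ ZF ∪ TcF := by
      intro v hv hadj
      rcases hadjcase hv hadj with ho | hi
      · have := houtc v hv ho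
        apply Finset.mem_union_right
        rw [hTcF, Finset.mem_filter]
        exact ⟨hmemOF.mpr ⟨hv, this.1, this.2⟩, ho⟩
      · rcases hpart v hv with rfl | rfl | rfl | hIn
        · exact absurd hi hpno
        · apply Finset.mem_union_left
          apply Finset.mem_union_right
          rw [hZF, Finset.mem_filter]
          exact ⟨by simp, hi⟩
        · apply Finset.mem_union_left
          apply Finset.mem_union_right
          rw [hZF, Finset.mem_filter]
          exact ⟨by simp, hi⟩
        · apply Finset.mem_union_left
          apply Finset.mem_union_left
          rw [hWcF, Finset.mem_filter]
          exact ⟨hmemOF.mpr ⟨hv, hIn, T.choose_not_anc2 hi.2.2⟩, hi⟩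
    have hsub3 : ({n1, n2, n3} : Finset V) ⊆ WcF ∪ ZF ∪ TcF := by
      intro v hv
      simp only [Finset.mem_insert, Finset.mem_singleton] at hv
      rcases hv with rfl | rfl | rfl
      · exact hnmem hn1.1 hn1.2
      · exact hnmem hn2.1 hn2.2
      · exact hnmem hn3.1 hn3.2
    have hc3 : ({n1, n2, n3} : Finset V).card = 3 := by
      rw [Finset.card_insert_of_notMem (by simp [hne12, hne13]),
        Finset.card_insert_of_notMem (by simp [hne23]), Finset.card_singleton]
    calc 3 = ({n1, n2, n3} : Finset V).card := hc3.symm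
    _ ≤ (WcF ∪ ZF ∪ TcF).card := Finset.card_le_card hsub3
    _ ≤ (WcF ∪ ZF).card + TcF.card := Finset.card_union_le _ _
    _ ≤ WcF.card + ZF.card + TcF.card := by
        have := Finset.card_union_le WcF ZF
        omega
  -- (c2) at most one out-neighbour within QF
  have hA_lt : (T.arcsIn S QF).card < QF.card := by
    apply T.arcsIn_lt_card ⟨c, Finset.mem_insert_self c OF⟩
    intro v hv
    rw [Finset.card_le_one]
    intro a ha b hb
    rw [Finset.mem_filter] at ha hb
    have hmem : ∀ {x}, x ∈ QF → x = c ∨ x ∈ OF := by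
      intro x hx
      rw [hQF, Finset.mem_insert] at hx
      exact hx
    rcases hmem hv with rfl | hvOF
    · -- v = c
      have haC : a ∈ C := by
        rcases hmem ha.1 with rfl | h
        · exact absurd ha.2 (T.arc_irrefl)
        · exact (hmemOF.mp h).1
      have hbC : b ∈ C := by
        rcases hmem hb.1 with rfl | h
        · exact absurd hb.2 (T.arc_irrefl)
        · exact (hmemOF.mp h).1
      exact houts a b haC hbC ha.2 hb.2
    · have hvC := (hmemOF.mp hvOF).1
      have hvIn := (hmemOF.mp hvOF).2.1
      rcases hmem ha.1 with rfl | haOF <;> rcases hmem hb.1 with rfl | hbOF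
      · rfl
      · exfalso
        have := hwout v hvC hvIn.1 hvIn.2 ha.2 b (hmemOF.mp hbOF).1 hb.2
        exact (hmemOF.mp hbOF).2.2 this
      · exfalso
        have := hwout v hvC hvIn.1 hvIn.2 hb.2 a (hmemOF.mp haOF).1 ha.2
        exact (hmemOF.mp haOF).2.2 this
      · exact houtIn v hvC a (hmemOF.mp haOF).1 b (hmemOF.mp hbOF).1
          hvIn.2 hvIn.1 ha.2 hb.2
  have hQcard : QF.card = OF.card + 1 := Finset.card_insert_of_notMem hcOF
  -- (c4) lower bound on arcs in QF
  have hlow : (T.arcsIn S OF).card + WcF.card + TcF.card ≤ (T.arcsIn S QF).card := by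
    set U1 := T.arcsIn S OF with hU1
    set U2 := WcF.image (fun w => (w, c)) with hU2
    set U3 := TcF.image (fun t => (c, t)) with hU3
    have hOFQF : OF ⊆ QF := Finset.subset_insert _ _
    have hsubU : U1 ∪ U2 ∪ U3 ⊆ T.arcsIn S QF := by
      intro q hq
      rw [Finset.mem_union, Finset.mem_union] at hq
      rcases hq with (hq | hq) | hq
      · rw [hU1, T.mem_arcsIn] at hq
        exact T.mem_arcsIn.mpr ⟨hOFQF hq.1, hOFQF hq.2.1, hq.2.2⟩
      · rw [hU2, Finset.mem_image] at hq
        obtain ⟨w, hw, rfl⟩ := hq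
        rw [hWcF, Finset.mem_filter] at hw
        exact T.mem_arcsIn.mpr ⟨hOFQF hw.1, Finset.mem_insert_self c OF, hw.2⟩
      · rw [hU3, Finset.mem_image] at hq
        obtain ⟨t, ht, rfl⟩ := hq
        rw [hTcF, Finset.mem_filter] at ht
        exact T.mem_arcsIn.mpr ⟨Finset.mem_insert_self c OF, hOFQF ht.1, ht.2⟩
    have hd12 : Disjoint U1 U2 := by
      rw [Finset.disjoint_right]
      rintro q hq hq'
      rw [hU2, Finset.mem_image] at hq
      obtain ⟨w, hw, rfl⟩ := hq
      rw [hU1, T.mem_arcsIn] at hq'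
      exact hcOF hq'.2.1
    have hd13 : Disjoint U1 U3 := by
      rw [Finset.disjoint_right]
      rintro q hq hq'
      rw [hU3, Finset.mem_image] at hq
      obtain ⟨t, ht, rfl⟩ := hq
      rw [hU1, T.mem_arcsIn] at hq'
      exact hcOF hq'.1
    have hd23 : Disjoint U2 U3 := by
      rw [Finset.disjoint_right]
      rintro q hq hq'
      rw [hU3, Finset.mem_image] at hq
      rw [hU2, Finset.mem_image] at hq'
      obtain ⟨t, ht, rfl⟩ := hq
      obtain ⟨w, hw, hweq⟩ := hq'
      have : w = c := congrArg Prod.fst hweq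
      subst this
      rw [hWcF, Finset.mem_filter] at hw
      exact hcOF hw.1
    have hcardu : (U1 ∪ U2 ∪ U3).card = U1.card + U2.card + U3.card := by
      rw [Finset.card_union_of_disjoint, Finset.card_union_of_disjoint hd12]
      rw [Finset.disjoint_union_left]
      exact ⟨hd13, hd23⟩
    have hcu2 : U2.card = WcF.card :=
      Finset.card_image_of_injective _ (fun a b h => congrArg Prod.fst h)
    have hcu3 : U3.card = TcF.card :=
      Finset.card_image_of_injective _ (fun a b h => congrArg Prod.snd h)
    calc (T.arcsIn S OF).card + WcF.card + TcF.card
        = (U1 ∪ U2 ∪ U3).card := by rw [hcardu, hcu2, hcu3]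
    _ ≤ (T.arcsIn S QF).card := Finset.card_le_card hsubU
  -- (c5) degree split for OF
  have hOFsubCF : OF ⊆ CF := (Finset.filter_subset _ _).trans (Finset.filter_subset _ _)
  set cutO := (T.pairsAdj S OF (CF \ OF)).card with hcutO
  have hsplit : 2 * (T.arcsIn S OF).card + cutO = 2 * OF.card := by
    have hdisjIO : Disjoint OF (CF \ OF) := Finset.disjoint_sdiff
    have hdegsplit : ∀ v ∈ OF,
        (OF.filter (fun u => (T.UGraph S).Adj v u)).card
          + ((CF \ OF).filter (fun u => (T.UGraph S).Adj v u)).card = 2 := by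
      intro v hv
      have hdeg := T.deg_finset hhole' (hmemOF.mp hv).1
      have hunion : CF.filter (fun u => (T.UGraph S).Adj v u)
          = (OF.filter (fun u => (T.UGraph S).Adj v u))
            ∪ ((CF \ OF).filter (fun u => (T.UGraph S).Adj v u)) := by
        rw [← Finset.filter_union, Finset.union_sdiff_of_subset hOFsubCF]
      rw [← hCF] at hdeg
      rw [hunion, Finset.card_union_of_disjoint
        (Finset.disjoint_filter_filter hdisjIO)] at hdeg
      exact hdeg
    have h1 : ∑ v ∈ OF, ((OF.filter (fun u => (T.UGraph S).Adj v u)).card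
        + ((CF \ OF).filter (fun u => (T.UGraph S).Adj v u)).card) = ∑ _v ∈ OF, 2 :=
      Finset.sum_congr rfl hdegsplit
    rw [Finset.sum_add_distrib] at h1
    have h2 : ∑ v ∈ OF, (OF.filter (fun u => (T.UGraph S).Adj v u)).card
        = 2 * (T.arcsIn S OF).card := by
      rw [T.sum_deg_eq_card_adjPairs, T.card_adjPairs]
    have h3 : ∑ v ∈ OF, ((CF \ OF).filter (fun u => (T.UGraph S).Adj v u)).card
        = cutO := by
      rw [hcutO, T.card_pairsAdj_fst]
    have h4 : ∑ _v ∈ OF, 2 = 2 * OF.card := by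
      rw [Finset.sum_const, smul_eq_mul, Nat.mul_comm]
    rw [h2, h3, h4] at h1
    omega
  -- (c6) bound on the cut
  have hcut : cutO + ZF.card ≤ 2 + WcF.card := by
    set B1 := (({(b1, z1), (b2, z2)} : Finset (V × V)).filter
      (fun q => ¬ T.Arc S q.2 c)) with hB1
    set B2 := T.pairsAdj S WcF IcF with hB2
    have hsubNO : T.pairsAdj S OF (CF \ OF) ⊆ B1 ∪ B2 := by
      intro q hq
      rw [T.mem_pairsAdj] at hq
      obtain ⟨hv, hu, hadj⟩ := hq
      rw [Finset.mem_sdiff, hmemCF] at hu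
      have hvC := (hmemOF.mp hv).1
      have hvIn := (hmemOF.mp hv).2.1
      have hvnc := (hmemOF.mp hv).2.2
      rcases hpart q.2 hu.1 with he | he | he | hIn
      · exfalso
        rcases hcovp q.1 hvC (he ▸ hadj.symm) with rfl | rfl
        · exact hz1na hvIn.1
        · exact hz2na hvIn.1
      · -- q.2 = z1
        apply Finset.mem_union_left
        rw [hB1, Finset.mem_filter]
        have hq1 : q.1 = b1 := by
          rcases hcov1 q.1 hvC (he ▸ hadj.symm) with rfl | rfl
          · exact absurd rfl hvIn.2
          · rfl
        have hnz : ¬ T.Arc S z1 c := by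
          intro hzc
          exact hvnc (hq1 ▸ hziff1.mp hzc)
        constructor
        · simp only [Finset.mem_insert, Finset.mem_singleton]
          left
          rw [Prod.ext_iff]
          exact ⟨hq1, he⟩
        · rw [he]
          exact hnz
      · -- q.2 = z2
        apply Finset.mem_union_left
        rw [hB1, Finset.mem_filter]
        have hq1 : q.1 = b2 := by
          rcases hcov2 q.1 hvC (he ▸ hadj.symm) with rfl | rfl
          · exact absurd rfl hvIn.2
          · rfl
        have hnz : ¬ T.Arc S z2 c := by
          intro hzc
          exact hvnc (hq1 ▸ hziff2.mp hzc)
        constructor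
        · simp only [Finset.mem_insert, Finset.mem_singleton]
          right
          rw [Prod.ext_iff]
          exact ⟨hq1, he⟩
        · rw [he]
          exact hnz
      · -- q.2 strictly below p
        have hcu : T.Anc c q.2 := by
          by_contra hnc
          exact hu.2 (hmemOF.mpr ⟨hu.1, hIn, hnc⟩)
        have hq2c : q.2 ≠ c := hcne hu.1
        have harcdir : T.Arc S q.1 q.2 := by
          rw [T.ugraph_adj] at hadj
          rcases hadj.2 with h | h
          · exact h
          · exact absurd (T.choose_stay hcu hq2c h.2.2).1 hvnc
        have hcq : c ∈ T.choose q.1 := T.choose_crossing harcdir.2.2 hcu hvnc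
        have harc_vc : T.Arc S q.1 c := ⟨harcdir.1, hcS, hcq⟩
        apply Finset.mem_union_right
        rw [hB2, T.mem_pairsAdj]
        refine ⟨?_, hmemIcF.mpr ⟨hu.1, hIn, hcu⟩, hadj⟩
        rw [hWcF, Finset.mem_filter]
        exact ⟨hv, harc_vc⟩
    have hB1card : B1.card + ZF.card ≤ 2 := by
      have hZsub : ZF ⊆ ({z1, z2} : Finset V) := Finset.filter_subset _ _
      have hmap : ∀ q ∈ B1, q.2 ∈ ({z1, z2} : Finset V) \ ZF := by
        intro q hq
        rw [hB1, Finset.mem_filter] at hq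
        rw [Finset.mem_sdiff]
        constructor
        · rcases Finset.mem_insert.mp hq.1 with h | h
          · rw [h]; simp
          · rw [Finset.mem_singleton] at h; rw [h]; simp
        · rw [hZF, Finset.mem_filter]
          exact fun hh => hq.2 hh.2
      have hinj : Set.InjOn (fun q : V × V => q.2) B1 := by
        intro a ha b hb hab
        simp only [Finset.mem_coe] at ha hb
        rw [hB1, Finset.mem_filter] at ha hb
        simp only at hab
        rcases Finset.mem_insert.mp ha.1 with h | h <;>
          rcases Finset.mem_insert.mp hb.1 with h' | h'
        · rw [h, h']
        · rw [Finset.mem_singleton] at h'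
          exfalso
          rw [h, h'] at hab
          exact hzne hab
        · rw [Finset.mem_singleton] at h
          exfalso
          rw [h, h'] at hab
          exact hzne hab.symm
        · rw [Finset.mem_singleton] at h h'
          rw [h, h']
      have hcard1 : B1.card ≤ (({z1, z2} : Finset V) \ ZF).card :=
        Finset.card_le_card_of_injOn _ hmap hinj
      have hcard2 : (({z1, z2} : Finset V) \ ZF).card = 2 - ZF.card := by
        rw [Finset.card_sdiff_of_subset hZsub]
        congr 1
        rw [Finset.card_insert_of_notMem (by simp [hzne]), Finset.card_singleton]
      have hZle : ZF.card ≤ 2 := by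
        calc ZF.card ≤ ({z1, z2} : Finset V).card := Finset.card_le_card hZsub
        _ = 2 := by
          rw [Finset.card_insert_of_notMem (by simp [hzne]), Finset.card_singleton]
      omega
    have hB2card : B2.card ≤ WcF.card := by
      rw [hB2, T.card_pairsAdj_fst]
      calc ∑ v ∈ WcF, (IcF.filter (fun u => (T.UGraph S).Adj v u)).card
          ≤ ∑ _v ∈ WcF, 1 := by
            refine Finset.sum_le_sum fun v hv => ?_
            rw [Finset.card_le_one]
            intro a ha b hb
            rw [Finset.mem_filter] at ha hb
            rw [hWcF, Finset.mem_filter] at hv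
            have hvOF := hv.1
            have hvC := (hmemOF.mp hvOF).1
            have hvIn := (hmemOF.mp hvOF).2.1
            have hdir : ∀ {x}, x ∈ IcF → (T.UGraph S).Adj v x → T.Arc S v x := by
              intro x hx hadj
              rw [T.ugraph_adj] at hadj
              rcases hadj.2 with h | h
              · exact h
              · exfalso
                have hxm := hmemIcF.mp hx
                exact (hmemOF.mp hvOF).2.2 (T.choose_stay hxm.2.2 (hcne hxm.1) h.2.2).1
            exact houtIn v hvC a (hmemIcF.mp ha.1).1 b (hmemIcF.mp hb.1).1 hvIn.2 hvIn.1
              (hdir ha.1 ha.2) (hdir hb.1 hb.2)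
      _ = WcF.card := by simp
    have hstep1 : cutO ≤ (B1 ∪ B2).card := Finset.card_le_card hsubNO
    have hstep2 : (B1 ∪ B2).card ≤ B1.card + B2.card := Finset.card_union_le B1 B2
    omega
  omega
end
end BurlingTree

/-- No wheel is a Burling graph: no graph derived from a Burling tree
consists of a hole `C` (induced cycle of length at least 4) together with one
additional vertex `c` having at least three neighbors in `C`. -/
theorem stmt18 (V : Type) (T : BurlingTree V) (S : Set V) (C : Set V) (c : V)
    (hc : c ∉ C) (hS : S = insert c C)
    (hhole : T.IsHole S C)
    (hdeg : 3 ≤ ({y | y ∈ C ∧ (T.UGraph S).Adj c y}).ncard) :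
    False :=
  T.wheel_false hc hS hhole hdeg
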